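/- arXiv:1210.0725 — 6 statements merged into one kernel-verified Lean document; each statement's English description precedes it below -/
import Mathlib

section
/- Let (μ_n) be a sequence of Borel probability measures on ℝ, let (a_n) be a sequence of positive reals with a_n → ∞, let σ² > 0, and set I(x) = x²/(2σ²). Assume that for every x ≥ 0, lim_{n→∞} (1/a_n) log μ_n([x,∞)) = −I(x), and for every x ≤ 0, lim_{n→∞} (1/a_n) log μ_n((−∞,x]) = −I(x). Then for every nonempty closed set C ⊆ ℝ, limsup_{n→∞} (1/a_n) log μ_n(C) ≤ −inf_{x∈C} I(x). -/
open MeasureTheory Filter Set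
open scoped ENNReal

private lemma my_coe_mul_add {r : ℝ} (hr : 0 ≤ r) (x y : EReal) :
    (r : EReal) * (x + y) = (r : EReal) * x + (r : EReal) * y := by
  rcases hr.eq_or_lt with h | h
  · simp [← h]
  · induction x using EReal.rec with
    | bot => simp [EReal.coe_mul_bot_of_pos h]
    | top =>
      induction y using EReal.rec with
      | bot => simp [EReal.coe_mul_bot_of_pos h]
      | coe y =>
        rw [EReal.top_add_of_ne_bot (by simp), EReal.coe_mul_top_of_pos h, ← EReal.coe_mul,
          EReal.top_add_of_ne_bot (EReal.coe_ne_bot _)]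
      | top => rw [EReal.top_add_top, EReal.coe_mul_top_of_pos h, EReal.top_add_top]
    | coe x =>
      induction y using EReal.rec with
      | bot => simp [EReal.coe_mul_bot_of_pos h, ← EReal.coe_mul]
      | coe y => norm_cast; ring
      | top =>
        rw [EReal.add_top_of_ne_bot (by simp), EReal.coe_mul_top_of_pos h, ← EReal.coe_mul,
          EReal.add_top_of_ne_bot (EReal.coe_ne_bot _)]

private lemma my_coe_mul_max {r : ℝ} (hr : 0 ≤ r) (x y : EReal) :
    (r : EReal) * max x y = max ((r : EReal) * x) ((r : EReal) * y) := by
  have hr' : (0 : EReal) ≤ (r : EReal) := by exact_mod_cast hr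
  rcases le_total x y with h | h
  · rw [max_eq_right h, max_eq_right (mul_le_mul_of_nonneg_left h hr')]
  · rw [max_eq_left h, max_eq_left (mul_le_mul_of_nonneg_left h hr')]

private lemma my_limsup_le {f g : ℕ → EReal} {L : EReal}
    (hfg : ∀ n, f n ≤ g n) (hg : Tendsto g atTop (nhds L)) :
    limsup f atTop ≤ L :=
  le_of_le_of_eq (limsup_le_limsup (Eventually.of_forall hfg)) hg.limsup_eq

private lemma my_log_two : ENNReal.log 2 = ((Real.log 2 : ℝ) : EReal) := by
  rw [show (2 : ℝ≥0∞) = ENNReal.ofReal 2 by simp]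
  exact ENNReal.log_ofReal_of_pos two_pos

/-- If the half-line probabilities of `μ_n` satisfy
`(1/a_n) log μ_n [x, ∞) → −x²/(2σ²)` for `x ≥ 0` and
`(1/a_n) log μ_n (−∞, x] → −x²/(2σ²)` for `x ≤ 0`, with `a_n → ∞` positive and `σ² > 0`,
then the LDP upper bound `limsup (1/a_n) log μ_n C ≤ −inf_C I` holds for every nonempty
closed `C ⊆ ℝ`, where `I x = x²/(2σ²)`. Logarithms are `ENNReal.log` (valued in `EReal`)
and the infimum is taken in `EReal`. -/
theorem stmt3 (μ : ℕ → Measure ℝ) [∀ n, IsProbabilityMeasure (μ n)]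
    (a : ℕ → ℝ) (ha : ∀ n, 0 < a n) (ha' : Tendsto a atTop atTop)
    (σ2 : ℝ) (hσ2 : 0 < σ2) (I : ℝ → ℝ) (hI : I = fun x => x ^ 2 / (2 * σ2))
    (hupper : ∀ x : ℝ, 0 ≤ x →
      Tendsto (fun n => (((a n)⁻¹ : ℝ) : EReal) * ENNReal.log (μ n (Set.Ici x)))
        atTop (nhds ((-(I x) : ℝ) : EReal)))
    (hlower : ∀ x : ℝ, x ≤ 0 →
      Tendsto (fun n => (((a n)⁻¹ : ℝ) : EReal) * ENNReal.log (μ n (Set.Iic x)))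
        atTop (nhds ((-(I x) : ℝ) : EReal))) :
    ∀ C : Set ℝ, C.Nonempty → IsClosed C →
      limsup (fun n => (((a n)⁻¹ : ℝ) : EReal) * ENNReal.log (μ n C)) atTop
        ≤ -(⨅ x ∈ C, (I x : EReal)) := by
  intro C hCne hCcl
  have hwnn : ∀ n, (0 : ℝ) ≤ (a n)⁻¹ := fun n => inv_nonneg.2 (ha n).le
  have hwnn' : ∀ n, (0 : EReal) ≤ (((a n)⁻¹ : ℝ) : EReal) := fun n => by exact_mod_cast hwnn n
  have hinv0 : Tendsto (fun n => (a n)⁻¹) atTop (nhds 0) := ha'.inv_tendsto_atTop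
  -- a bound via a single member of C
  have neg_le : ∀ p ∈ C, (((-(I p)) : ℝ) : EReal) ≤ -(⨅ x ∈ C, (I x : EReal)) := by
    intro p hp
    rw [EReal.coe_neg]
    exact EReal.neg_le_neg_iff.2 (iInf₂_le p hp)
  have single : ∀ (S : Set ℝ) (L : ℝ), C ⊆ S →
      Tendsto (fun n => (((a n)⁻¹ : ℝ) : EReal) * ENNReal.log (μ n S)) atTop (nhds (L : EReal)) →
      limsup (fun n => (((a n)⁻¹ : ℝ) : EReal) * ENNReal.log (μ n C)) atTop ≤ (L : EReal) := by
    intro S L hsub hT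
    refine my_limsup_le (fun n => ?_) hT
    exact mul_le_mul_of_nonneg_left (ENNReal.log_monotone (measure_mono hsub)) (hwnn' n)
  by_cases hA : (C ∩ Ici 0).Nonempty
  · have hAcl : IsClosed (C ∩ Ici 0) := hCcl.inter isClosed_Ici
    have hAbdd : BddBelow (C ∩ Ici 0) := ⟨0, fun x hx => hx.2⟩
    set p := sInf (C ∩ Ici 0) with hp
    have hpmem : p ∈ C ∩ Ici 0 := hAcl.csInf_mem hA hAbdd
    have hp0 : (0 : ℝ) ≤ p := hpmem.2
    have hple : ∀ x ∈ C, 0 ≤ x → p ≤ x := fun x hx hx0 => csInf_le hAbdd ⟨hx, hx0⟩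
    by_cases hB : (C ∩ Iic 0).Nonempty
    · -- both sides nonempty
      have hBcl : IsClosed (C ∩ Iic 0) := hCcl.inter isClosed_Iic
      have hBbdd : BddAbove (C ∩ Iic 0) := ⟨0, fun x hx => hx.2⟩
      set q := sSup (C ∩ Iic 0) with hq
      have hqmem : q ∈ C ∩ Iic 0 := hBcl.csSup_mem hB hBbdd
      have hq0 : q ≤ 0 := hqmem.2
      have hsub : C ⊆ Iic q ∪ Ici p := by
        intro x hx
        rcases le_total x 0 with h | h
        · exact Or.inl (le_csSup hBbdd ⟨hx, h⟩)
        · exact Or.inr (hple x hx h)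
      -- pointwise bound
      have key : ∀ n, (((a n)⁻¹ : ℝ) : EReal) * ENNReal.log (μ n C) ≤
          ((((a n)⁻¹ * Real.log 2 : ℝ)) : EReal) +
            max ((((a n)⁻¹ : ℝ) : EReal) * ENNReal.log (μ n (Iic q)))
                ((((a n)⁻¹ : ℝ) : EReal) * ENNReal.log (μ n (Ici p))) := by
        intro n
        have hmeas : μ n C ≤ 2 * (μ n (Iic q) ⊔ μ n (Ici p)) := by
          calc μ n C ≤ μ n (Iic q ∪ Ici p) := measure_mono hsub
            _ ≤ μ n (Iic q) + μ n (Ici p) := measure_union_le _ _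
            _ ≤ (μ n (Iic q) ⊔ μ n (Ici p)) + (μ n (Iic q) ⊔ μ n (Ici p)) :=
                add_le_add le_sup_left le_sup_right
            _ = 2 * (μ n (Iic q) ⊔ μ n (Ici p)) := (two_mul _).symm
        have hlog : ENNReal.log (μ n C) ≤
            ENNReal.log 2 + (ENNReal.log (μ n (Iic q)) ⊔ ENNReal.log (μ n (Ici p))) := by
          calc ENNReal.log (μ n C) ≤ ENNReal.log (2 * (μ n (Iic q) ⊔ μ n (Ici p))) :=
              ENNReal.log_monotone hmeas
            _ = ENNReal.log 2 + ENNReal.log (μ n (Iic q) ⊔ μ n (Ici p)) := ENNReal.log_mul_add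
            _ = ENNReal.log 2 + (ENNReal.log (μ n (Iic q)) ⊔ ENNReal.log (μ n (Ici p))) := by
                rw [ENNReal.log_monotone.map_sup]
        calc (((a n)⁻¹ : ℝ) : EReal) * ENNReal.log (μ n C)
            ≤ (((a n)⁻¹ : ℝ) : EReal) *
              (ENNReal.log 2 + (ENNReal.log (μ n (Iic q)) ⊔ ENNReal.log (μ n (Ici p)))) :=
              mul_le_mul_of_nonneg_left hlog (hwnn' n)
          _ = ((((a n)⁻¹ * Real.log 2 : ℝ)) : EReal) +
              max ((((a n)⁻¹ : ℝ) : EReal) * ENNReal.log (μ n (Iic q)))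
                  ((((a n)⁻¹ : ℝ) : EReal) * ENNReal.log (μ n (Ici p))) := by
              rw [my_coe_mul_add (hwnn n), my_coe_mul_max (hwnn n), my_log_two,
                ← EReal.coe_mul]
      -- limit of the bound
      have hc : Tendsto (fun n => ((((a n)⁻¹ * Real.log 2 : ℝ)) : EReal)) atTop
          (nhds ((0 : ℝ) : EReal)) := by
        apply EReal.tendsto_coe.2
        simpa using hinv0.mul_const (Real.log 2)
      have hm : Tendsto (fun n =>
          max ((((a n)⁻¹ : ℝ) : EReal) * ENNReal.log (μ n (Iic q)))
              ((((a n)⁻¹ : ℝ) : EReal) * ENNReal.log (μ n (Ici p)))) atTop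
          (nhds (max ((-(I q) : ℝ) : EReal) ((-(I p) : ℝ) : EReal))) :=
        (hlower q hq0).max (hupper p hp0)
      have hsum : Tendsto (fun n => ((((a n)⁻¹ * Real.log 2 : ℝ)) : EReal) +
          max ((((a n)⁻¹ : ℝ) : EReal) * ENNReal.log (μ n (Iic q)))
              ((((a n)⁻¹ : ℝ) : EReal) * ENNReal.log (μ n (Ici p)))) atTop
          (nhds (((0 : ℝ) : EReal) + max ((-(I q) : ℝ) : EReal) ((-(I p) : ℝ) : EReal))) := by
        have hcont : ContinuousAt (fun r : EReal × EReal => r.1 + r.2)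
            (((0 : ℝ) : EReal), max ((-(I q) : ℝ) : EReal) ((-(I p) : ℝ) : EReal)) := by
          apply EReal.continuousAt_add
          · exact Or.inl (by simp)
          · exact Or.inl (by simp)
        exact hcont.tendsto.comp (hc.prodMk_nhds hm)
      have hlimsup := my_limsup_le key hsum
      rw [show ((0 : ℝ) : EReal) + max ((-(I q) : ℝ) : EReal) ((-(I p) : ℝ) : EReal)
          = max ((-(I q) : ℝ) : EReal) ((-(I p) : ℝ) : EReal) by
        rw [EReal.coe_zero, zero_add]] at hlimsup
      exact hlimsup.trans (max_le (neg_le q hqmem.1) (neg_le p hpmem.1))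
    · -- C ⊆ Ici p
      have hsub : C ⊆ Ici p := by
        intro x hx
        rcases le_total x 0 with h | h
        · exact absurd ⟨hx, h⟩ (fun hmem => hB ⟨x, hmem⟩)
        · exact hple x hx h
      exact (single (Ici p) (-(I p)) hsub (hupper p hp0)).trans (neg_le p hpmem.1)
  · -- C ⊆ Iic q
    have hB : (C ∩ Iic 0).Nonempty := by
      obtain ⟨x, hx⟩ := hCne
      rcases le_total x 0 with h | h
      · exact ⟨x, hx, h⟩
      · exact absurd ⟨x, hx, h⟩ hA
    have hBcl : IsClosed (C ∩ Iic 0) := hCcl.inter isClosed_Iic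
    have hBbdd : BddAbove (C ∩ Iic 0) := ⟨0, fun x hx => hx.2⟩
    set q := sSup (C ∩ Iic 0) with hq
    have hqmem : q ∈ C ∩ Iic 0 := hBcl.csSup_mem hB hBbdd
    have hq0 : q ≤ 0 := hqmem.2
    have hsub : C ⊆ Iic q := by
      intro x hx
      rcases le_total x 0 with h | h
      · exact le_csSup hBbdd ⟨hx, h⟩
      · exact absurd ⟨hx, h⟩ (fun hmem => hA ⟨x, hmem⟩)
    exact (single (Iic q) (-(I q)) hsub (hlower q hq0)).trans (neg_le q hqmem.1)
end

section
/- Let (μ_n) be a sequence of Borel probability measures on ℝ, let (a_n) be a sequence of positive reals with a_n → ∞, let σ² > 0, and set I(x) = x²/(2σ²). Assume that for every x ≥ 0, lim_{n→∞} (1/a_n) log μ_n([x,∞)) = −I(x), and for every x ≤ 0, lim_{n→∞} (1/a_n) log μ_n((−∞,x]) = −I(x). Then for every x ∈ ℝ and every ε > 0, liminf_{n→∞} (1/a_n) log μ_n((x−ε, x+ε)) ≥ −inf_{y∈(x−ε,x+ε)} I(y). -/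
open MeasureTheory Filter Set
open scoped ENNReal

open scoped ENNReal

lemma ereal_mul_add_coe (c d : ℝ) (hc : 0 < c) (w : EReal) :
    (c : EReal) * ((d : EReal) + w) = ((c * d : ℝ) : EReal) + (c : EReal) * w := by
  induction w with
  | bot => rw [EReal.add_bot, EReal.mul_bot_of_pos (by exact_mod_cast hc), EReal.add_bot]
  | coe w => norm_cast; ring
  | top => rw [EReal.coe_add_top, EReal.mul_top_of_pos (by exact_mod_cast hc), EReal.coe_add_top]

lemma aux_liminf (c : ℕ → ℝ) (hc : ∀ n, 0 < c n) (hc0 : Tendsto c atTop (nhds 0))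
    (S T U : ℕ → ℝ≥0∞) (hSTU : ∀ n, S n ≤ U n + T n)
    (A B : ℝ) (hAB : A < B)
    (hS : Tendsto (fun n => ((c n : ℝ) : EReal) * ENNReal.log (S n)) atTop (nhds ((-A : ℝ) : EReal)))
    (hT : Tendsto (fun n => ((c n : ℝ) : EReal) * ENNReal.log (T n)) atTop (nhds ((-B : ℝ) : EReal))) :
    ((-A : ℝ) : EReal) ≤ liminf (fun n => ((c n : ℝ) : EReal) * ENNReal.log (U n)) atTop := by
  rw [le_liminf_iff]
  intro b hb
  obtain ⟨r, hbr, hrA⟩ := EReal.exists_between_coe_real hb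
  set p : ℝ := max r ((-B + -A)/2) with hp
  have hpA : p < -A := max_lt (by exact_mod_cast hrA) (by linarith)
  have hBp : -B < p := lt_of_lt_of_le (by linarith) (le_max_right _ _)
  set q : ℝ := (p + -A)/2 with hq
  have hpq : p < q := by simp only [hq]; linarith
  have hqA : q < -A := by simp only [hq]; linarith
  set l2 : ℝ := Real.log 2 with hl2
  have hlog2 : ENNReal.log 2 = (l2 : EReal) := by
    rw [show (2 : ℝ≥0∞) = ENNReal.ofReal 2 by simp, ENNReal.log_ofReal_of_pos two_pos]
  have E1 : ∀ᶠ n in atTop, (q : EReal) < (c n : EReal) * ENNReal.log (S n) :=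
    hS.eventually_const_lt (by exact_mod_cast hqA)
  have E2 : ∀ᶠ n in atTop, (c n : EReal) * ENNReal.log (T n) < (p : EReal) :=
    hT.eventually_lt_const (by exact_mod_cast hBp)
  have E3 : ∀ᶠ n in atTop, (c n : EReal) * (l2 : EReal) ≤ ((q - p : ℝ) : EReal) := by
    have : Tendsto (fun n => c n * l2) atTop (nhds (0 * l2)) := hc0.mul_const l2
    rw [zero_mul] at this
    filter_upwards [this.eventually_lt_const (by linarith : (0:ℝ) < q - p)] with n hn
    rw [← EReal.coe_mul]
    exact_mod_cast hn.le
  filter_upwards [E1, E2, E3] with n h1 h2 h3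
  by_contra hcon
  push_neg at hcon
  have hUp : (c n : EReal) * ENNReal.log (U n) ≤ (p : EReal) := by
    refine le_trans hcon ?_
    calc b ≤ (r : EReal) := hbr.le
    _ ≤ (p : EReal) := by exact_mod_cast le_max_left _ _
  -- chain
  have hc' : (0:EReal) ≤ (c n : EReal) := by exact_mod_cast (hc n).le
  have step1 : ENNReal.log (S n) ≤ (l2 : EReal) + (ENNReal.log (U n) ⊔ ENNReal.log (T n)) := by
    rw [← hlog2, ← ENNReal.log_monotone.map_sup, ← ENNReal.log_mul_add]
    refine ENNReal.log_monotone ((hSTU n).trans ?_)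
    rw [two_mul]
    exact add_le_add le_sup_left le_sup_right
  have step2 : (c n : EReal) * ENNReal.log (S n)
      ≤ ((c n * l2 : ℝ) : EReal) + ((c n : EReal) * ENNReal.log (U n) ⊔ (c n : EReal) * ENNReal.log (T n)) := by
    calc (c n : EReal) * ENNReal.log (S n)
        ≤ (c n : EReal) * ((l2 : EReal) + (ENNReal.log (U n) ⊔ ENNReal.log (T n))) :=
          mul_le_mul_of_nonneg_left step1 hc'
      _ = ((c n * l2 : ℝ) : EReal) + (c n : EReal) * (ENNReal.log (U n) ⊔ ENNReal.log (T n)) :=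
          ereal_mul_add_coe _ _ (hc n) _
      _ = ((c n * l2 : ℝ) : EReal) + ((c n : EReal) * ENNReal.log (U n) ⊔ (c n : EReal) * ENNReal.log (T n)) := by
          congr 1
          exact Monotone.map_sup (fun w w' h => mul_le_mul_of_nonneg_left h hc') _ _
  have hsup : ((c n : EReal) * ENNReal.log (U n) ⊔ (c n : EReal) * ENNReal.log (T n)) ≤ (p : EReal) :=
    sup_le hUp h2.le
  have hml2 : ((c n * l2 : ℝ) : EReal) ≤ ((q - p : ℝ) : EReal) := by
    rw [EReal.coe_mul]; exact h3
  have : (q : EReal) < (q : EReal) := by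
    calc (q : EReal) < (c n : EReal) * ENNReal.log (S n) := h1
      _ ≤ ((c n * l2 : ℝ) : EReal) + ((c n : EReal) * ENNReal.log (U n) ⊔ (c n : EReal) * ENNReal.log (T n)) := step2
      _ ≤ ((q - p : ℝ) : EReal) + (p : EReal) := add_le_add hml2 hsup
      _ = (q : EReal) := by norm_cast; ring
  exact absurd this (lt_irrefl _)

/-- Under the same half-line assumptions as in Statement 3, the LDP lower
bound holds for every open ball: for all `x ∈ ℝ` and `ε > 0`,
`liminf (1/a_n) log μ_n ((x−ε, x+ε)) ≥ −inf_{y ∈ (x−ε,x+ε)} I(y)`, where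
`I y = y²/(2σ²)`. Logarithms are `ENNReal.log` (valued in `EReal`). -/
theorem stmt4 (μ : ℕ → Measure ℝ) [∀ n, IsProbabilityMeasure (μ n)]
    (a : ℕ → ℝ) (ha : ∀ n, 0 < a n) (ha' : Tendsto a atTop atTop)
    (σ2 : ℝ) (hσ2 : 0 < σ2) (I : ℝ → ℝ) (hI : I = fun x => x ^ 2 / (2 * σ2))
    (hupper : ∀ x : ℝ, 0 ≤ x →
      Tendsto (fun n => (((a n)⁻¹ : ℝ) : EReal) * ENNReal.log (μ n (Set.Ici x)))
        atTop (nhds ((-(I x) : ℝ) : EReal)))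
    (hlower : ∀ x : ℝ, x ≤ 0 →
      Tendsto (fun n => (((a n)⁻¹ : ℝ) : EReal) * ENNReal.log (μ n (Set.Iic x)))
        atTop (nhds ((-(I x) : ℝ) : EReal))) :
    ∀ (x : ℝ) (ε : ℝ), 0 < ε →
      -(⨅ y ∈ Set.Ioo (x - ε) (x + ε), (I y : EReal))
        ≤ liminf
            (fun n => (((a n)⁻¹ : ℝ) : EReal) * ENNReal.log (μ n (Set.Ioo (x - ε) (x + ε))))
            atTop := by
  intro x ε hε
  rw [EReal.neg_le]
  refine le_iInf₂ fun y hy => ?_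
  rw [EReal.neg_le, ← EReal.coe_neg]
  obtain ⟨hy1, hy2⟩ := hy
  have hc0 : Tendsto (fun n => (a n)⁻¹) atTop (nhds 0) := ha'.inv_tendsto_atTop
  have hcp : ∀ n, 0 < (a n)⁻¹ := fun n => inv_pos.2 (ha n)
  rcases le_or_gt 0 y with hy0 | hy0
  · set z := (y + (x + ε)) / 2 with hz
    have hyz : y < z := by rw [hz]; linarith
    have hz2 : z < x + ε := by rw [hz]; linarith
    have hIlt : I y < I z := by
      rw [hI]
      have h2 : y ^ 2 < z ^ 2 := by
        apply pow_lt_pow_left₀ hyz hy0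
        norm_num
      dsimp only
      gcongr
    have hsub : ∀ n, μ n (Set.Ici y) ≤ μ n (Set.Ioo (x - ε) (x + ε)) + μ n (Set.Ici z) := by
      intro n
      refine (measure_mono ?_).trans (measure_union_le _ _)
      intro t ht
      rcases lt_or_ge t z with h | h
      · exact Or.inl ⟨lt_of_lt_of_le hy1 ht, h.trans hz2⟩
      · exact Or.inr h
    exact aux_liminf _ hcp hc0 _ _ _ hsub _ _ hIlt (hupper y hy0) (hupper z (hy0.trans hyz.le))
  · set z := (y + (x - ε)) / 2 with hz
    have hyz : z < y := by rw [hz]; linarith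
    have hz2 : x - ε < z := by rw [hz]; linarith
    have hIlt : I y < I z := by
      rw [hI]
      have h2 : y ^ 2 < z ^ 2 := by
        have hz0 : z < 0 := hyz.trans hy0
        have h3 : y ^ 2 < (-z) ^ 2 :=
          sq_lt_sq' (by rwa [neg_neg]) (by linarith)
        rwa [neg_pow, Even.neg_one_pow (by norm_num), one_mul] at h3
      dsimp only
      gcongr
    have hsub : ∀ n, μ n (Set.Iic y) ≤ μ n (Set.Ioo (x - ε) (x + ε)) + μ n (Set.Iic z) := by
      intro n
      refine (measure_mono ?_).trans (measure_union_le _ _)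
      intro t ht
      rcases lt_or_ge z t with h | h
      · exact Or.inl ⟨hz2.trans h, lt_of_le_of_lt ht hy2⟩
      · exact Or.inr h
    exact aux_liminf _ hcp hc0 _ _ _ hsub _ _ hIlt (hlower y hy0.le)
      (hlower z ((hyz.trans hy0).le))
end

section
/- Let (Ω, F, P) be a probability space, let (X_n) and (Y_n) be sequences of real-valued random variables on Ω such that X_n and Y_n are independent for each n, let (a_n) be positive reals with a_n → ∞, and let 0 < λ < β. Set σ² = λ⁻¹ − β⁻¹, I(x) = x²/(2σ²), J(x) = λx²/2, K(x) = βx²/2. Assume the laws of Y_n satisfy the LDP with speed (a_n) and rate function K, and the laws of X_n + Y_n satisfy the LDP with speed (a_n) and rate function J. Then for every x ≥ 0, limsup_{n→∞} (1/a_n) log P(X_n ≥ x) ≤ −I(x), and for every x ≤ 0, limsup_{n→∞} (1/a_n) log P(X_n ≤ x) ≤ −I(x). -/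
open MeasureTheory ProbabilityTheory Filter Set


lemma key_aux {Ω : Type*} [MeasurableSpace Ω] (P : Measure Ω) [IsProbabilityMeasure P]
    (A B C : ℕ → Set Ω) (a : ℕ → ℝ) (ha : ∀ n, 0 < a n)
    (hmul : ∀ n, P (A n ∩ B n) = P (A n) * P (B n)) (hsub : ∀ n, A n ∩ B n ⊆ C n)
    (c b : ℝ)
    (hC : limsup (fun n => (((a n)⁻¹ : ℝ) : EReal) * ENNReal.log (P (C n))) atTop ≤ (c : EReal))
    (hB : (b : EReal) ≤ liminf (fun n => (((a n)⁻¹ : ℝ) : EReal) * ENNReal.log (P (B n))) atTop) :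
    limsup (fun n => (((a n)⁻¹ : ℝ) : EReal) * ENNReal.log (P (A n))) atTop
      ≤ ((c - b : ℝ) : EReal) := by
  set u : ℕ → EReal := fun n => (((a n)⁻¹ : ℝ) : EReal) * ENNReal.log (P (A n)) with hu
  set v : ℕ → EReal := fun n => (((a n)⁻¹ : ℝ) : EReal) * ENNReal.log (P (B n)) with hv
  have hcn : ∀ n, (0:ℝ) < (a n)⁻¹ := fun n => inv_pos.2 (ha n)
  have hpt : ∀ n, u n + v n ≤ (((a n)⁻¹ : ℝ) : EReal) * ENNReal.log (P (C n)) := by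
    intro n
    have hle : P (A n) * P (B n) ≤ P (C n) := (hmul n) ▸ measure_mono (hsub n)
    by_cases hA0 : P (A n) = 0
    · simp [hu, hA0, EReal.coe_mul_bot_of_pos (hcn n), EReal.bot_add]
    by_cases hB0 : P (B n) = 0
    · simp [hv, hB0, EReal.coe_mul_bot_of_pos (hcn n), EReal.add_bot]
    have hAt : ENNReal.log (P (A n)) ≠ ⊤ := by simp [measure_ne_top]
    have hAb : ENNReal.log (P (A n)) ≠ ⊥ := by simp [hA0]
    have hBt : ENNReal.log (P (B n)) ≠ ⊤ := by simp [measure_ne_top]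
    have hBb : ENNReal.log (P (B n)) ≠ ⊥ := by simp [hB0]
    set la := (ENNReal.log (P (A n))).toReal with hla
    set lb := (ENNReal.log (P (B n))).toReal with hlb
    have hA' : ENNReal.log (P (A n)) = (la : EReal) := (EReal.coe_toReal hAt hAb).symm
    have hB' : ENNReal.log (P (B n)) = (lb : EReal) := (EReal.coe_toReal hBt hBb).symm
    have : u n + v n = (((a n)⁻¹ : ℝ) : EReal) * (ENNReal.log (P (A n)) + ENNReal.log (P (B n))) := by
      rw [hu, hv]; simp only []
      rw [hA', hB', ← EReal.coe_add, ← EReal.coe_mul, ← EReal.coe_mul, ← EReal.coe_add,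
        ← EReal.coe_mul, mul_add]
    rw [this, ← ENNReal.log_mul_add]
    exact mul_le_mul_of_nonneg_left (ENNReal.log_monotone hle) (EReal.coe_nonneg.2 (hcn n).le)
  have h1 : limsup (fun n => u n + v n) atTop ≤ (c : EReal) :=
    le_trans (limsup_le_limsup (Eventually.of_forall hpt)) hC
  have h2 : limsup u atTop + liminf v atTop ≤ limsup (fun n => u n + v n) atTop :=
    EReal.le_limsup_add
  have hv0 : ∀ n, v n ≤ 0 := by
    intro n
    have : ENNReal.log (P (B n)) ≤ 0 := by
      have h01 := ENNReal.log_monotone (prob_le_one (μ := P) (s := B n))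
      simpa using h01
    calc v n = (((a n)⁻¹ : ℝ) : EReal) * ENNReal.log (P (B n)) := rfl
      _ ≤ (((a n)⁻¹ : ℝ) : EReal) * 0 :=
          mul_le_mul_of_nonneg_left this (EReal.coe_nonneg.2 (hcn n).le)
      _ = 0 := mul_zero _
  have hM0 : liminf v atTop ≤ 0 :=
    (liminf_le_limsup).trans (limsup_le_of_le (by isBoundedDefault) (Eventually.of_forall hv0))
  have hMb : liminf v atTop ≠ ⊥ := fun h => by simp [h] at hB
  have hMt : liminf v atTop ≠ ⊤ := fun h => by simp [h] at hM0
  set m := (liminf v atTop).toReal with hm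
  have hM' : liminf v atTop = (m : EReal) := (EReal.coe_toReal hMt hMb).symm
  have hbm : b ≤ m := by rw [hM'] at hB; exact_mod_cast hB
  have h3 : limsup u atTop + (m : EReal) ≤ (c : EReal) := by
    rw [← hM']; exact h2.trans h1
  set L := limsup u atTop with hLdef
  clear_value L
  induction L with
  | bot => exact bot_le
  | top => rw [EReal.top_add_coe] at h3; exact absurd h3 (by simp)
  | coe l =>
    rw [← EReal.coe_add] at h3
    have hlc : l + m ≤ c := by exact_mod_cast h3
    exact_mod_cast (by linarith : l ≤ c - b)


lemma iInf_quad_Ici (bb r : ℝ) (hb : 0 ≤ bb) (hr : 0 ≤ r) :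
    (⨅ z ∈ Ici r, ((bb * z ^ 2 / 2 : ℝ) : EReal)) = ((bb * r ^ 2 / 2 : ℝ) : EReal) := by
  apply le_antisymm
  · exact iInf₂_le r (mem_Ici.2 le_rfl)
  · exact le_iInf₂ fun z hz => EReal.coe_le_coe_iff.2 (by have h := mem_Ici.1 hz; nlinarith [mul_nonneg (sub_nonneg.2 h) (by linarith : (0:ℝ) ≤ z + r)])

lemma iInf_quad_Iic (bb r : ℝ) (hb : 0 ≤ bb) (hr : r ≤ 0) :
    (⨅ z ∈ Iic r, ((bb * z ^ 2 / 2 : ℝ) : EReal)) = ((bb * r ^ 2 / 2 : ℝ) : EReal) := by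
  apply le_antisymm
  · exact iInf₂_le r (mem_Iic.2 le_rfl)
  · exact le_iInf₂ fun z hz => EReal.coe_le_coe_iff.2 (by have h := mem_Iic.1 hz; nlinarith [mul_nonpos_of_nonneg_of_nonpos (sub_nonneg.2 h) (by linarith : r + z ≤ 0)])

lemma iInf_quad_Ioi (bb r : ℝ) (hb : 0 ≤ bb) (hr : 0 ≤ r) :
    (⨅ z ∈ Ioi r, ((bb * z ^ 2 / 2 : ℝ) : EReal)) = ((bb * r ^ 2 / 2 : ℝ) : EReal) := by
  apply le_antisymm
  · have hcont : Tendsto (fun δ : ℝ => ((bb * (r + δ) ^ 2 / 2 : ℝ) : EReal)) (nhdsWithin 0 (Ioi 0))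
        (nhds ((bb * r ^ 2 / 2 : ℝ) : EReal)) := by
      have h1 : ContinuousAt (fun δ : ℝ => bb * (r + δ) ^ 2 / 2) 0 := by fun_prop
      have h2 := (continuous_coe_real_ereal.continuousAt.comp h1).tendsto
      simp only [Function.comp, add_zero] at h2
      exact h2.mono_left nhdsWithin_le_nhds
    refine ge_of_tendsto hcont ?_
    filter_upwards [self_mem_nhdsWithin] with δ hδ
    exact iInf₂_le (r + δ) (by simp at hδ ⊢; linarith)
  · exact le_iInf₂ fun z hz => EReal.coe_le_coe_iff.2 (by have h := le_of_lt (mem_Ioi.1 hz); nlinarith [mul_nonneg (sub_nonneg.2 h) (by linarith : (0:ℝ) ≤ z + r)])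

lemma iInf_quad_Iio (bb r : ℝ) (hb : 0 ≤ bb) (hr : r ≤ 0) :
    (⨅ z ∈ Iio r, ((bb * z ^ 2 / 2 : ℝ) : EReal)) = ((bb * r ^ 2 / 2 : ℝ) : EReal) := by
  apply le_antisymm
  · have hcont : Tendsto (fun δ : ℝ => ((bb * (r - δ) ^ 2 / 2 : ℝ) : EReal)) (nhdsWithin 0 (Ioi 0))
        (nhds ((bb * r ^ 2 / 2 : ℝ) : EReal)) := by
      have h1 : ContinuousAt (fun δ : ℝ => bb * (r - δ) ^ 2 / 2) 0 := by fun_prop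
      have h2 := (continuous_coe_real_ereal.continuousAt.comp h1).tendsto
      simp only [Function.comp, sub_zero] at h2
      exact h2.mono_left nhdsWithin_le_nhds
    refine ge_of_tendsto hcont ?_
    filter_upwards [self_mem_nhdsWithin] with δ hδ
    exact iInf₂_le (r - δ) (by simp at hδ ⊢; linarith)
  · exact le_iInf₂ fun z hz => EReal.coe_le_coe_iff.2 (by have h := le_of_lt (mem_Iio.1 hz); nlinarith [mul_nonpos_of_nonneg_of_nonpos (sub_nonneg.2 h) (by linarith : r + z ≤ 0)])



/-- A sequence of Borel probability measures on `ℝ` satisfies the LDP with speed `a`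
and rate function `I`. Logarithms of measures are taken via `ENNReal.log` (valued in
`EReal`, so that `log 0 = ⊥`), and infima of the rate function are taken in `EReal`. -/
def SatisfiesLDP (μ : ℕ → Measure ℝ) (a : ℕ → ℝ) (I : ℝ → ℝ) : Prop :=
  (∀ C : Set ℝ, IsClosed C →
    limsup (fun n => (((a n)⁻¹ : ℝ) : EReal) * ENNReal.log (μ n C)) atTop
      ≤ -(⨅ x ∈ C, (I x : EReal))) ∧
  (∀ O : Set ℝ, IsOpen O →
    -(⨅ x ∈ O, (I x : EReal))
      ≤ liminf (fun n => (((a n)⁻¹ : ℝ) : EReal) * ENNReal.log (μ n O)) atTop)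

/-- Let `X_n, Y_n` be independent for each `n`, `a_n → ∞` positive,
`0 < λ < β`, `σ² = λ⁻¹ − β⁻¹`, `I x = x²/(2σ²)`, `J x = λx²/2`, `K x = βx²/2`. If the
laws of `Y_n` satisfy the LDP with speed `a_n` and rate `K`, and the laws of `X_n + Y_n`
satisfy the LDP with speed `a_n` and rate `J`, then for every `x ≥ 0`,
`limsup (1/a_n) log P(X_n ≥ x) ≤ −I(x)`, and for every `x ≤ 0`,
`limsup (1/a_n) log P(X_n ≤ x) ≤ −I(x)`. -/
theorem stmt8 {Ω : Type*} [MeasurableSpace Ω] (P : Measure Ω) [IsProbabilityMeasure P]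
    (X Y : ℕ → Ω → ℝ) (hX : ∀ n, Measurable (X n)) (hY : ∀ n, Measurable (Y n))
    (hindep : ∀ n, IndepFun (X n) (Y n) P)
    (a : ℕ → ℝ) (ha : ∀ n, 0 < a n) (ha' : Tendsto a atTop atTop)
    (lam β : ℝ) (hlam : 0 < lam) (hlamβ : lam < β)
    (σ2 : ℝ) (hσ2 : σ2 = lam⁻¹ - β⁻¹)
    (I J K : ℝ → ℝ)
    (hI : I = fun x => x ^ 2 / (2 * σ2))
    (hJ : J = fun x => lam * x ^ 2 / 2)
    (hK : K = fun x => β * x ^ 2 / 2)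
    (hLDPY : SatisfiesLDP (fun n => P.map (Y n)) a K)
    (hLDPXY : SatisfiesLDP (fun n => P.map (fun ω => X n ω + Y n ω)) a J) :
    (∀ x : ℝ, 0 ≤ x →
      limsup (fun n => (((a n)⁻¹ : ℝ) : EReal) * ENNReal.log (P {ω | x ≤ X n ω})) atTop
        ≤ ((-(I x) : ℝ) : EReal)) ∧
    (∀ x : ℝ, x ≤ 0 →
      limsup (fun n => (((a n)⁻¹ : ℝ) : EReal) * ENNReal.log (P {ω | X n ω ≤ x})) atTop
        ≤ ((-(I x) : ℝ) : EReal)) := by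
  have hβ : 0 < β := lt_trans hlam hlamβ
  have hd0 : (0:ℝ) < β - lam := by linarith
  constructor
  · intro x hx
    set y : ℝ := lam * x / (β - lam) with hy0
    have hy : 0 ≤ y := by positivity
    have hxy : 0 ≤ x + y := by positivity
    -- upper bound for the sum
    have hC := hLDPXY.1 (Ici (x + y)) isClosed_Ici
    have hmapC : ∀ n, (P.map (fun ω => X n ω + Y n ω)) (Ici (x + y))
        = P ((fun ω => X n ω + Y n ω) ⁻¹' Ici (x + y)) :=
      fun n => Measure.map_apply ((hX n).add (hY n)) measurableSet_Ici
    simp only [hmapC, hJ] at hC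
    rw [iInf_quad_Ici lam (x + y) hlam.le hxy, ← EReal.coe_neg] at hC
    -- lower bound for Y
    have hB := hLDPY.2 (Ioi y) isOpen_Ioi
    have hmapB : ∀ n, (P.map (Y n)) (Ioi y) = P (Y n ⁻¹' Ioi y) :=
      fun n => Measure.map_apply (hY n) measurableSet_Ioi
    simp only [hmapB, hK] at hB
    rw [iInf_quad_Ioi β y hβ.le hy, ← EReal.coe_neg] at hB
    have hkey := key_aux P (fun n => X n ⁻¹' Ici x) (fun n => Y n ⁻¹' Ioi y)
      (fun n => (fun ω => X n ω + Y n ω) ⁻¹' Ici (x + y)) a ha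
      (fun n => (hindep n).measure_inter_preimage_eq_mul _ _ measurableSet_Ici measurableSet_Ioi)
      (fun n ω hω => by
        have h1 : x ≤ X n ω := hω.1
        have h2 : y < Y n ω := hω.2
        simp only [mem_preimage, mem_Ici]
        linarith)
      _ _ hC hB
    have harith : -(lam * (x + y) ^ 2 / 2) - -(β * y ^ 2 / 2) = -(I x) := by
      rw [hI, hσ2, hy0]
      have h1 : lam ≠ 0 := hlam.ne'
      have h2 : β ≠ 0 := hβ.ne'
      have h3 : β - lam ≠ 0 := hd0.ne'
      field_simp
      ring
    rw [harith] at hkey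
    exact hkey
  · intro x hx
    set y : ℝ := lam * x / (β - lam) with hy0
    have hy : y ≤ 0 := by
      rw [hy0]
      apply div_nonpos_of_nonpos_of_nonneg _ hd0.le
      exact mul_nonpos_of_nonneg_of_nonpos hlam.le hx
    have hxy : x + y ≤ 0 := by linarith
    have hC := hLDPXY.1 (Iic (x + y)) isClosed_Iic
    have hmapC : ∀ n, (P.map (fun ω => X n ω + Y n ω)) (Iic (x + y))
        = P ((fun ω => X n ω + Y n ω) ⁻¹' Iic (x + y)) :=
      fun n => Measure.map_apply ((hX n).add (hY n)) measurableSet_Iic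
    simp only [hmapC, hJ] at hC
    rw [iInf_quad_Iic lam (x + y) hlam.le hxy, ← EReal.coe_neg] at hC
    have hB := hLDPY.2 (Iio y) isOpen_Iio
    have hmapB : ∀ n, (P.map (Y n)) (Iio y) = P (Y n ⁻¹' Iio y) :=
      fun n => Measure.map_apply (hY n) measurableSet_Iio
    simp only [hmapB, hK] at hB
    rw [iInf_quad_Iio β y hβ.le hy, ← EReal.coe_neg] at hB
    have hkey := key_aux P (fun n => X n ⁻¹' Iic x) (fun n => Y n ⁻¹' Iio y)
      (fun n => (fun ω => X n ω + Y n ω) ⁻¹' Iic (x + y)) a ha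
      (fun n => (hindep n).measure_inter_preimage_eq_mul _ _ measurableSet_Iic measurableSet_Iio)
      (fun n ω hω => by
        have h1 : X n ω ≤ x := hω.1
        have h2 : Y n ω < y := hω.2
        simp only [mem_preimage, mem_Iic]
        linarith)
      _ _ hC hB
    have harith : -(lam * (x + y) ^ 2 / 2) - -(β * y ^ 2 / 2) = -(I x) := by
      rw [hI, hσ2, hy0]
      have h1 : lam ≠ 0 := hlam.ne'
      have h2 : β ≠ 0 := hβ.ne'
      have h3 : β - lam ≠ 0 := hd0.ne'
      field_simp
      ring
    rw [harith] at hkey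
    exact hkey
end

section
/- Let (Ω, F, P) be a probability space, let (X_n) and (Y_n) be sequences of real-valued random variables on Ω such that X_n and Y_n are independent for each n, let (a_n) be positive reals with a_n → ∞, and let 0 < λ < β. Set J(x) = λx²/2, K(x) = βx²/2. Assume the laws of Y_n satisfy the LDP with speed (a_n) and rate function K, and the laws of X_n + Y_n satisfy the LDP with speed (a_n) and rate function J. Fix x ≥ 0 and ε > 0, and set x₀ = βx/(β−λ). Then lim_{n→∞} P(X_n < x and X_n + Y_n ≥ x₀ + ε) / P(X_n + Y_n ≥ x₀ + ε) = 0 (the denominator being strictly positive for all sufficiently large n). -/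
open MeasureTheory ProbabilityTheory Filter Set
open scoped ENNReal

lemma inv_mul_eq_div_ereal (r : ℝ) (L : EReal) :
    ((r⁻¹ : ℝ) : EReal) * L = L / (r : EReal) := by
  rw [EReal.coe_inv, EReal.div_eq_inv_mul]

/-- Extract an eventual exponential upper bound from the LDP upper bound. -/
lemma ldp_upper_exp {μ : ℕ → Measure ℝ} {a : ℕ → ℝ} {I : ℝ → ℝ}
    (h : SatisfiesLDP μ a I) (ha : ∀ n, 0 < a n)
    {C : Set ℝ} (hC : IsClosed C) {r δ : ℝ} (hr : ∀ z ∈ C, r ≤ I z) (hδ : 0 < δ) :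
    ∀ᶠ n in atTop, μ n C ≤ ENNReal.ofReal (Real.exp (a n * (-r + δ))) := by
  have h1 : limsup (fun n => (((a n)⁻¹ : ℝ) : EReal) * ENNReal.log (μ n C)) atTop
      ≤ ((-r : ℝ) : EReal) := by
    refine (h.1 C hC).trans ?_
    rw [show ((-r : ℝ) : EReal) = -((r : ℝ) : EReal) by simp, EReal.neg_le_neg_iff]
    exact le_iInf₂ fun z hz => by exact_mod_cast hr z hz
  have h2 : limsup (fun n => (((a n)⁻¹ : ℝ) : EReal) * ENNReal.log (μ n C)) atTop
      < ((-r + δ : ℝ) : EReal) :=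
    h1.trans_lt (by exact_mod_cast (by linarith : (-r : ℝ) < -r + δ))
  filter_upwards [eventually_lt_of_limsup_lt h2] with n hn
  have hb : (0 : EReal) < ((a n : ℝ) : EReal) := by exact_mod_cast ha n
  have hn' : ENNReal.log (μ n C) / ((a n : ℝ) : EReal) ≤ ((-r + δ : ℝ) : EReal) := by
    rw [← inv_mul_eq_div_ereal]; exact hn.le
  have h3 : ENNReal.log (μ n C) ≤ ((a n * (-r + δ) : ℝ) : EReal) := by
    rw [EReal.coe_mul]
    exact (EReal.div_le_iff_le_mul hb (by simp)).mp hn'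
  calc μ n C = EReal.exp (ENNReal.log (μ n C)) := (ENNReal.exp_log _).symm
    _ ≤ EReal.exp ((a n * (-r + δ) : ℝ) : EReal) := EReal.exp_monotone h3
    _ = ENNReal.ofReal (Real.exp (a n * (-r + δ))) := EReal.exp_coe _

/-- Extract an eventual exponential lower bound from the LDP lower bound. -/
lemma ldp_lower_exp {μ : ℕ → Measure ℝ} {a : ℕ → ℝ} {I : ℝ → ℝ}
    (h : SatisfiesLDP μ a I) (ha : ∀ n, 0 < a n)
    {O : Set ℝ} (hO : IsOpen O) {y : ℝ} (hy : y ∈ O) {δ : ℝ} (hδ : 0 < δ) :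
    ∀ᶠ n in atTop, ENNReal.ofReal (Real.exp (a n * (-(I y) - δ))) ≤ μ n O := by
  have h1 : ((-(I y) : ℝ) : EReal)
      ≤ liminf (fun n => (((a n)⁻¹ : ℝ) : EReal) * ENNReal.log (μ n O)) atTop := by
    refine le_trans ?_ (h.2 O hO)
    rw [show ((-(I y) : ℝ) : EReal) = -((I y : ℝ) : EReal) by simp, EReal.neg_le_neg_iff]
    exact iInf₂_le y hy
  have h2 : ((-(I y) - δ : ℝ) : EReal)
      < liminf (fun n => (((a n)⁻¹ : ℝ) : EReal) * ENNReal.log (μ n O)) atTop :=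
    lt_of_lt_of_le (by exact_mod_cast (by linarith : (-(I y) - δ : ℝ) < -(I y))) h1
  filter_upwards [eventually_lt_of_lt_liminf h2] with n hn
  have hb : ((a n : ℝ) : EReal) > 0 := by exact_mod_cast ha n
  have hn' : ((-(I y) - δ : ℝ) : EReal) ≤ ENNReal.log (μ n O) / ((a n : ℝ) : EReal) := by
    rw [← inv_mul_eq_div_ereal]; exact hn.le
  have h3 : ((a n * (-(I y) - δ) : ℝ) : EReal) ≤ ENNReal.log (μ n O) := by
    rw [EReal.coe_mul, mul_comm]
    exact (EReal.le_div_iff_mul_le hb (by simp)).mp hn'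
  calc ENNReal.ofReal (Real.exp (a n * (-(I y) - δ)))
      = EReal.exp ((a n * (-(I y) - δ) : ℝ) : EReal) := (EReal.exp_coe _).symm
    _ ≤ EReal.exp (ENNReal.log (μ n O)) := EReal.exp_monotone h3
    _ = μ n O := ENNReal.exp_log _

/-- Key algebraic inequality: for `0 ≤ t ≤ x`, with `c = βx/(β-λ)+ε`,
`γ t²/2 + β(c-t)²/2 ≥ λc²/2 + (β-λ)ε²/2` where `γ = λβ/(β-λ)`. -/
lemma key_alg {lam β x ε : ℝ} (hlam : 0 < lam) (hlb : lam < β) (hε : 0 < ε)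
    {t : ℝ} (h1 : t ≤ x) :
    lam * (β * x / (β - lam) + ε) ^ 2 / 2 + (β - lam) * ε ^ 2 / 2
      ≤ lam * β / (β - lam) * t ^ 2 / 2 + β * (β * x / (β - lam) + ε - t) ^ 2 / 2 := by
  have hd : 0 < β - lam := by linarith
  have key : (lam * β / (β - lam) * t ^ 2 + β * (β * x / (β - lam) + ε - t) ^ 2)
      - (lam * (β * x / (β - lam) + ε) ^ 2 + (β - lam) * ε ^ 2)
      = (β ^ 2 / (β - lam)) * (x - t) ^ 2 + 2 * β * ε * (x - t) := by
    field_simp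
    ring
  nlinarith [mul_nonneg (div_nonneg (sq_nonneg β) hd.le) (sq_nonneg (x - t)),
    mul_nonneg (mul_nonneg (mul_nonneg (by norm_num : (0:ℝ) ≤ 2) (by linarith : (0:ℝ) ≤ β)) hε.le)
      (sub_nonneg.mpr h1)]

lemma quad_cont {A q η : ℝ} (hA : 0 < A) (hq : 0 ≤ q) (hη : 0 < η) :
    ∃ ρ : ℝ, 0 < ρ ∧ A * (q + ρ) ^ 2 / 2 ≤ A * q ^ 2 / 2 + η := by
  refine ⟨min 1 (η / (A * (2 * q + 1))), lt_min one_pos (by positivity), ?_⟩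
  set ρ := min 1 (η / (A * (2 * q + 1))) with hρ
  have h1 : ρ ≤ 1 := min_le_left _ _
  have h3 : 0 < ρ := lt_min one_pos (by positivity)
  have h4 : ρ * (A * (2 * q + 1)) ≤ η := by
    rw [← le_div_iff₀ (by positivity)]
    exact min_le_right _ _
  nlinarith [mul_nonneg (mul_nonneg hA.le h3.le) (sub_nonneg.mpr h1)]

lemma sq_rate_mono {A q z : ℝ} (hA : 0 ≤ A) (hq : 0 ≤ q) (hz : q ≤ z) :
    A * q ^ 2 / 2 ≤ A * z ^ 2 / 2 := by nlinarith [mul_le_mul hz hz hq (hq.trans hz)]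

lemma ofReal_exp_mono {a p q : ℝ} (ha : 0 ≤ a) (h : p ≤ q) :
    ENNReal.ofReal (Real.exp (a * p)) ≤ ENNReal.ofReal (Real.exp (a * q)) :=
  ENNReal.ofReal_le_ofReal (Real.exp_le_exp.mpr (mul_le_mul_of_nonneg_left h ha))

set_option maxHeartbeats 2000000 in
/-- Under LDPs for the laws of `Y_n` (rate `K x = βx²/2`) and of
`X_n + Y_n` (rate `J x = λx²/2`), with `X_n, Y_n` independent, `a_n → ∞` positive,
`0 < λ < β`, `x ≥ 0`, `ε > 0` and `x₀ = βx/(β−λ)`: the conditional probability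
`P(X_n < x and X_n + Y_n ≥ x₀ + ε) / P(X_n + Y_n ≥ x₀ + ε)` tends to `0`, the
denominator being strictly positive for all sufficiently large `n`. -/
theorem stmt9 {Ω : Type*} [MeasurableSpace Ω] (P : Measure Ω) [IsProbabilityMeasure P]
    (X Y : ℕ → Ω → ℝ) (hX : ∀ n, Measurable (X n)) (hY : ∀ n, Measurable (Y n))
    (hindep : ∀ n, IndepFun (X n) (Y n) P)
    (a : ℕ → ℝ) (ha : ∀ n, 0 < a n) (ha' : Tendsto a atTop atTop)
    (lam β : ℝ) (hlam : 0 < lam) (hlamβ : lam < β)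
    (J K : ℝ → ℝ)
    (hJ : J = fun x => lam * x ^ 2 / 2)
    (hK : K = fun x => β * x ^ 2 / 2)
    (hLDPY : SatisfiesLDP (fun n => P.map (Y n)) a K)
    (hLDPXY : SatisfiesLDP (fun n => P.map (fun ω => X n ω + Y n ω)) a J)
    (x : ℝ) (hx : 0 ≤ x) (ε : ℝ) (hε : 0 < ε)
    (x₀ : ℝ) (hx₀ : x₀ = β * x / (β - lam)) :
    (∀ᶠ n in atTop, 0 < P {ω | x₀ + ε ≤ X n ω + Y n ω}) ∧
    Tendsto
      (fun n =>
        P {ω | X n ω < x ∧ x₀ + ε ≤ X n ω + Y n ω} /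
          P {ω | x₀ + ε ≤ X n ω + Y n ω})
      atTop (nhds 0) := by
  have hd : 0 < β - lam := by linarith
  have hβ0 : 0 < β := hlam.trans hlamβ
  have hx₀0 : 0 ≤ x₀ := by rw [hx₀]; positivity
  set c : ℝ := x₀ + ε with hc
  have hc0 : 0 < c := by simp only [hc]; linarith
  have hcx : x ≤ x₀ := by
    rw [hx₀, le_div_iff₀ hd]; nlinarith
  set cJ : ℝ := lam * c ^ 2 / 2 with hcJ
  set η : ℝ := (β - lam) * ε ^ 2 / 2 with hη
  have hη0 : 0 < η := by positivity
  set γ : ℝ := lam * β / (β - lam) with hγ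
  have hγ0 : 0 < γ := by positivity
  have hS : ∀ n, Measurable fun ω => X n ω + Y n ω := fun n => (hX n).add (hY n)
  -- the grid
  set m : ℕ := ⌈4 * γ * x ^ 2 / η⌉₊ + 1 with hm
  have hm0 : (0 : ℝ) < m := by positivity
  have hmesh : γ * x ^ 2 / m ≤ η / 4 := by
    rw [div_le_iff₀ hm0]
    have h1 : 4 * γ * x ^ 2 / η ≤ (m : ℝ) := by
      refine le_trans (Nat.le_ceil _) ?_
      exact_mod_cast Nat.le_succ _
    rw [div_le_iff₀ hη0] at h1
    nlinarith
  set t : ℕ → ℝ := fun i => (i : ℝ) * (x / m) with ht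
  have ht0 : ∀ i, 0 ≤ t i := fun i => by positivity
  have htle : ∀ i, i ≤ m → t i ≤ x := by
    intro i hi
    have : (i : ℝ) ≤ m := by exact_mod_cast hi
    calc t i = (i : ℝ) * (x / m) := rfl
      _ ≤ (m : ℝ) * (x / m) := by
          apply mul_le_mul_of_nonneg_right this (by positivity)
      _ = x := by field_simp
  set sfn : ℕ → ℝ := fun i => lam * t i / (β - lam) with hsfn
  have hsfn0 : ∀ i, 0 ≤ sfn i := fun i => by
    have := ht0 i; simp only [hsfn]; positivity
  set ufn : ℕ → ℝ := fun i => t i + sfn i with hufn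
  have hufn0 : ∀ i, 0 ≤ ufn i := fun i => add_nonneg (ht0 i) (hsfn0 i)
  set vfn : ℕ → ℝ := fun i => c - t (i + 1) with hvfn
  have hvfn0 : ∀ i, i + 1 ≤ m → 0 ≤ vfn i := by
    intro i hi
    have := htle (i + 1) hi
    simp only [hvfn, hc]
    linarith
  -- eventual denominator lower bound
  have hDen : ∀ᶠ n in atTop,
      ENNReal.ofReal (Real.exp (a n * (-cJ - η / 4))) ≤ P {ω | c ≤ X n ω + Y n ω} := by
    obtain ⟨ρ, hρ0, hρle⟩ := quad_cont (A := lam) (q := c) hlam hc0.le (by positivity : (0:ℝ) < η / 8)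
    have hmem : c + ρ ∈ Ioi c := by simp [hρ0]
    have h := ldp_lower_exp hLDPXY ha isOpen_Ioi hmem (δ := η / 8) (by positivity)
    filter_upwards [h] with n hn
    have hJval : J (c + ρ) ≤ cJ + η / 8 := by rw [hJ]; exact hρle
    refine le_trans (ofReal_exp_mono (ha n).le (by linarith)) (hn.trans ?_)
    rw [Measure.map_apply (hS n) measurableSet_Ioi]
    exact measure_mono fun ω hω => (le_of_lt (mem_Ioi.mp hω) : c ≤ X n ω + Y n ω)
  -- eventual bound for the negative piece
  have hAneg : ∀ᶠ n in atTop,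
      (P.map (Y n)) (Ici c) ≤ ENNReal.ofReal (Real.exp (a n * (-cJ - η / 2))) := by
    have h := ldp_upper_exp hLDPY ha isClosed_Ici (r := β * c ^ 2 / 2)
      (fun z hz => by rw [hK]; exact sq_rate_mono hβ0.le hc0.le hz) (δ := η / 4) (by positivity)
    filter_upwards [h] with n hn
    refine hn.trans (ofReal_exp_mono (ha n).le ?_)
    have hcε : ε ≤ c := by simp only [hc]; linarith
    have : (β - lam) * ε ^ 2 / 2 ≤ (β - lam) * c ^ 2 / 2 := sq_rate_mono hd.le hε.le hcε
    simp only [hcJ, hη]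
    nlinarith
  -- eventual bounds for the grid pieces
  have hPieces : ∀ᶠ n in atTop, ∀ i ∈ Finset.range m,
      ((P.map fun ω => X n ω + Y n ω) (Ici (ufn i))
          ≤ ENNReal.ofReal (Real.exp (a n * (-(lam * (ufn i) ^ 2 / 2) + η / 16)))) ∧
      ((P.map (Y n)) (Ici (vfn i))
          ≤ ENNReal.ofReal (Real.exp (a n * (-(β * (vfn i) ^ 2 / 2) + η / 16)))) ∧
      (ENNReal.ofReal (Real.exp (a n * (-(β * (sfn i) ^ 2 / 2) - η / 8)))
          ≤ (P.map (Y n)) (Ioi (sfn i))) := by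
    rw [eventually_all_finset]
    intro i hi
    have him : i + 1 ≤ m := Finset.mem_range.mp hi
    have hU := ldp_upper_exp hLDPXY ha isClosed_Ici (r := lam * (ufn i) ^ 2 / 2)
      (fun z hz => by rw [hJ]; exact sq_rate_mono hlam.le (hufn0 i) hz) (δ := η / 16)
      (by positivity)
    have hV := ldp_upper_exp hLDPY ha isClosed_Ici (r := β * (vfn i) ^ 2 / 2)
      (fun z hz => by rw [hK]; exact sq_rate_mono hβ0.le (hvfn0 i him) hz) (δ := η / 16)
      (by positivity)
    obtain ⟨ρ, hρ0, hρle⟩ := quad_cont (A := β) (q := sfn i) hβ0 (hsfn0 i)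
      (by positivity : (0:ℝ) < η / 16)
    have hmem : sfn i + ρ ∈ Ioi (sfn i) := by simp [hρ0]
    have hL := ldp_lower_exp hLDPY ha isOpen_Ioi hmem (δ := η / 16) (by positivity)
    filter_upwards [hU, hV, hL] with n hn1 hn2 hn3
    refine ⟨hn1, hn2, le_trans (ofReal_exp_mono (ha n).le ?_) hn3⟩
    have hKval : K (sfn i + ρ) ≤ β * (sfn i) ^ 2 / 2 + η / 16 := by rw [hK]; exact hρle
    linarith
  -- bounds used in combining
  have hEbnd_pos : ∀ n, (0 : ℝ≥0∞) < ENNReal.ofReal (Real.exp (a n * (-cJ - η / 4))) :=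
    fun n => ENNReal.ofReal_pos.mpr (Real.exp_pos _)
  constructor
  · filter_upwards [hDen] with n hn
    exact lt_of_lt_of_le (hEbnd_pos n) hn
  · -- squeeze
    set bndR : ℕ → ℝ := fun n => ((m : ℝ) + 1) * Real.exp (a n * (-(η / 4))) with hbndR
    have htend : Tendsto (fun n => ENNReal.ofReal (bndR n)) atTop (nhds 0) := by
      have h1 : Tendsto (fun n => a n * (-(η / 4))) atTop atBot :=
        ha'.atTop_mul_const_of_neg (by linarith)
      have h2 := Real.tendsto_exp_atBot.comp h1
      have h3 : Tendsto bndR atTop (nhds 0) := by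
        have := h2.const_mul ((m : ℝ) + 1)
        simpa [hbndR] using this
      simpa using ENNReal.tendsto_ofReal h3
    refine tendsto_of_tendsto_of_tendsto_of_le_of_le' tendsto_const_nhds htend
      (Eventually.of_forall fun n => zero_le) ?_
    filter_upwards [hDen, hAneg, hPieces] with n hDn hAn hPn
    set E : ℝ≥0∞ := ENNReal.ofReal (Real.exp (a n * (-cJ - η / 2))) with hE
    -- cover of the numerator event
    have hcover : {ω | X n ω < x ∧ c ≤ X n ω + Y n ω} ⊆
        {ω | X n ω < 0 ∧ c ≤ X n ω + Y n ω} ∪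
          ⋃ i ∈ Finset.range m, {ω | t i ≤ X n ω ∧ X n ω < t (i + 1) ∧ c ≤ X n ω + Y n ω} := by
      intro ω hω
      rcases lt_or_ge (X n ω) 0 with h0 | h0
      · exact mem_union_left _ ⟨h0, hω.2⟩
      · refine mem_union_right _ ?_
        have hxpos : 0 < x := lt_of_le_of_lt h0 hω.1
        have hh0 : 0 < x / m := by positivity
        have hdiv0 : 0 ≤ X n ω / (x / m) := div_nonneg h0 hh0.le
        refine mem_iUnion₂.mpr ⟨⌊X n ω / (x / m)⌋₊, Finset.mem_range.mpr ?_, ?_, ?_, hω.2⟩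
        · rw [Nat.floor_lt hdiv0, div_lt_iff₀ hh0]
          calc X n ω < x := hω.1
            _ = (m : ℝ) * (x / m) := by field_simp
        · calc t ⌊X n ω / (x / m)⌋₊ = (⌊X n ω / (x / m)⌋₊ : ℝ) * (x / m) := rfl
            _ ≤ (X n ω / (x / m)) * (x / m) :=
              mul_le_mul_of_nonneg_right (Nat.floor_le hdiv0) hh0.le
            _ = X n ω := by field_simp
        · have := Nat.lt_floor_add_one (X n ω / (x / m))
          calc X n ω = (X n ω / (x / m)) * (x / m) := by field_simp
            _ < ((⌊X n ω / (x / m)⌋₊ : ℝ) + 1) * (x / m) :=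
              mul_lt_mul_of_pos_right this hh0
            _ = t (⌊X n ω / (x / m)⌋₊ + 1) := by simp [ht]
    -- the negative piece
    have hAnegle : P {ω | X n ω < 0 ∧ c ≤ X n ω + Y n ω} ≤ E := by
      have hsub : {ω | X n ω < 0 ∧ c ≤ X n ω + Y n ω} ⊆ Y n ⁻¹' Ici c := by
        intro ω hω
        simp only [mem_setOf_eq] at hω
        simp only [mem_preimage, mem_Ici]
        linarith [hω.1, hω.2]
      calc P {ω | X n ω < 0 ∧ c ≤ X n ω + Y n ω} ≤ P (Y n ⁻¹' Ici c) := measure_mono hsub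
        _ = (P.map (Y n)) (Ici c) := (Measure.map_apply (hY n) measurableSet_Ici).symm
        _ ≤ E := hAn
    -- the grid pieces
    have hAile : ∀ i ∈ Finset.range m,
        P {ω | t i ≤ X n ω ∧ X n ω < t (i + 1) ∧ c ≤ X n ω + Y n ω} ≤ E := by
      intro i hi
      have him : i + 1 ≤ m := Finset.mem_range.mp hi
      obtain ⟨h1, h2, h3⟩ := hPn i hi
      set L : ℝ≥0∞ := ENNReal.ofReal (Real.exp (a n * (-(β * (sfn i) ^ 2 / 2) - η / 8))) with hL
      have hL0 : L ≠ 0 := (ENNReal.ofReal_pos.mpr (Real.exp_pos _)).ne'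
      have hLtop : L ≠ ⊤ := ENNReal.ofReal_ne_top
      rw [← ENNReal.mul_le_mul_iff_left hL0 hLtop]
      have hsub1 : {ω | t i ≤ X n ω ∧ X n ω < t (i + 1) ∧ c ≤ X n ω + Y n ω} ⊆
          X n ⁻¹' Ici (t i) ∩ Y n ⁻¹' Ici (vfn i) := by
        intro ω hω
        obtain ⟨ha1, ha2, ha3⟩ := hω
        refine ⟨ha1, ?_⟩
        simp only [mem_preimage, mem_Ici, hvfn]
        linarith
      have hprod1 : P (X n ⁻¹' Ici (t i) ∩ Y n ⁻¹' Ici (vfn i))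
          = P (X n ⁻¹' Ici (t i)) * P (Y n ⁻¹' Ici (vfn i)) :=
        indepFun_iff_measure_inter_preimage_eq_mul.mp (hindep n) _ _
          measurableSet_Ici measurableSet_Ici
      have hprod2 : P (X n ⁻¹' Ici (t i) ∩ Y n ⁻¹' Ioi (sfn i))
          = P (X n ⁻¹' Ici (t i)) * P (Y n ⁻¹' Ioi (sfn i)) :=
        indepFun_iff_measure_inter_preimage_eq_mul.mp (hindep n) _ _
          measurableSet_Ici measurableSet_Ioi
      have hsub2 : X n ⁻¹' Ici (t i) ∩ Y n ⁻¹' Ioi (sfn i) ⊆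
          (fun ω => X n ω + Y n ω) ⁻¹' Ici (ufn i) := by
        intro ω hω
        obtain ⟨hb1, hb2⟩ := hω
        simp only [mem_preimage, mem_Ici, mem_Ioi, hufn] at *
        linarith
      have hmain : P {ω | t i ≤ X n ω ∧ X n ω < t (i + 1) ∧ c ≤ X n ω + Y n ω} * L
          ≤ ENNReal.ofReal (Real.exp (a n * (-(lam * (ufn i) ^ 2 / 2) + η / 16)))
            * ENNReal.ofReal (Real.exp (a n * (-(β * (vfn i) ^ 2 / 2) + η / 16))) := by
        have hLY : L ≤ P (Y n ⁻¹' Ioi (sfn i)) := by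
          rw [← Measure.map_apply (hY n) measurableSet_Ioi]; exact h3
        calc P {ω | t i ≤ X n ω ∧ X n ω < t (i + 1) ∧ c ≤ X n ω + Y n ω} * L
            ≤ (P (X n ⁻¹' Ici (t i)) * P (Y n ⁻¹' Ici (vfn i))) * P (Y n ⁻¹' Ioi (sfn i)) :=
              mul_le_mul' (le_trans (measure_mono hsub1) hprod1.le) hLY
          _ = (P (X n ⁻¹' Ici (t i)) * P (Y n ⁻¹' Ioi (sfn i))) * P (Y n ⁻¹' Ici (vfn i)) := by
              ring
          _ = P (X n ⁻¹' Ici (t i) ∩ Y n ⁻¹' Ioi (sfn i)) * P (Y n ⁻¹' Ici (vfn i)) := by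
              rw [hprod2]
          _ ≤ P ((fun ω => X n ω + Y n ω) ⁻¹' Ici (ufn i)) * P (Y n ⁻¹' Ici (vfn i)) :=
              mul_le_mul' (measure_mono hsub2) le_rfl
          _ = (P.map fun ω => X n ω + Y n ω) (Ici (ufn i)) * (P.map (Y n)) (Ici (vfn i)) := by
              rw [Measure.map_apply (hS n) measurableSet_Ici,
                Measure.map_apply (hY n) measurableSet_Ici]
          _ ≤ _ := mul_le_mul' h1 h2
      refine hmain.trans ?_
      rw [← ENNReal.ofReal_mul (Real.exp_nonneg _), ← Real.exp_add, ← mul_add,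
        hE, hL, ← ENNReal.ofReal_mul (Real.exp_nonneg _), ← Real.exp_add, ← mul_add]
      refine ofReal_exp_mono (ha n).le ?_
      -- rate comparison
      have hid : lam * (ufn i) ^ 2 / 2 - β * (sfn i) ^ 2 / 2 = γ * (t i) ^ 2 / 2 := by
        simp only [hufn, hsfn, hγ]
        field_simp
        ring
      have hka := key_alg hlam hlamβ hε (htle (i + 1) him)
      have hcc : β * x / (β - lam) + ε = c := by rw [hc, hx₀]
      rw [hcc, ← hγ, ← hcJ, ← hη, show c - t (i + 1) = vfn i from rfl] at hka
      -- hka : cJ + η ≤ γ * t(i+1)²/2 + β * (vfn i)²/2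
      have hstep : γ * (t (i + 1)) ^ 2 / 2 - γ * (t i) ^ 2 / 2 ≤ η / 4 := by
        have hexp : (t (i + 1)) ^ 2 - (t i) ^ 2 = (x / m) * (t (i + 1) + t i) := by
          simp only [ht]
          push_cast
          ring
        have hsum : t (i + 1) + t i ≤ 2 * x := by
          have h7 := htle (i + 1) him
          have h8 := htle i (le_of_lt (Nat.lt_of_succ_le him))
          linarith
        have h2x : (x / m) * (t (i + 1) + t i) ≤ (x / m) * (2 * x) :=
          mul_le_mul_of_nonneg_left hsum (by positivity)
        have h5 : γ * ((x / m) * (t (i + 1) + t i)) ≤ γ * ((x / m) * (2 * x)) :=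
          mul_le_mul_of_nonneg_left h2x hγ0.le
        have h6 : γ * ((t (i + 1)) ^ 2 - (t i) ^ 2) / 2
            = γ * ((x / m) * (t (i + 1) + t i)) / 2 := by rw [hexp]
        have heq : γ * ((x / m) * (2 * x)) / 2 = γ * x ^ 2 / m := by
          field_simp
        linarith [hmesh, h5, h6, heq]
      linarith [hid, hka, hstep]
    -- total numerator bound
    have hnum : P {ω | X n ω < x ∧ c ≤ X n ω + Y n ω} ≤ ((m : ℝ≥0∞) + 1) * E := by
      calc P {ω | X n ω < x ∧ c ≤ X n ω + Y n ω}
          ≤ P ({ω | X n ω < 0 ∧ c ≤ X n ω + Y n ω} ∪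
              ⋃ i ∈ Finset.range m, {ω | t i ≤ X n ω ∧ X n ω < t (i + 1) ∧ c ≤ X n ω + Y n ω}) :=
            measure_mono hcover
        _ ≤ P {ω | X n ω < 0 ∧ c ≤ X n ω + Y n ω} +
              P (⋃ i ∈ Finset.range m,
                {ω | t i ≤ X n ω ∧ X n ω < t (i + 1) ∧ c ≤ X n ω + Y n ω}) :=
            measure_union_le _ _
        _ ≤ E + ∑ i ∈ Finset.range m,
              P {ω | t i ≤ X n ω ∧ X n ω < t (i + 1) ∧ c ≤ X n ω + Y n ω} :=
            add_le_add hAnegle (measure_biUnion_finset_le _ _)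
        _ ≤ E + ∑ _i ∈ Finset.range m, E := add_le_add le_rfl (Finset.sum_le_sum hAile)
        _ = ((m : ℝ≥0∞) + 1) * E := by
            rw [Finset.sum_const, Finset.card_range, nsmul_eq_mul]
            ring
    -- conclude
    set D : ℝ≥0∞ := ENNReal.ofReal (Real.exp (a n * (-cJ - η / 4))) with hD
    have hD0 : D ≠ 0 := (hEbnd_pos n).ne'
    have hDtop : D ≠ ⊤ := ENNReal.ofReal_ne_top
    calc P {ω | X n ω < x ∧ c ≤ X n ω + Y n ω} / P {ω | c ≤ X n ω + Y n ω}
        ≤ (((m : ℝ≥0∞) + 1) * E) / D := ENNReal.div_le_div hnum hDn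
      _ ≤ ENNReal.ofReal (bndR n) := by
          rw [ENNReal.div_le_iff_le_mul (Or.inl hD0) (Or.inl hDtop)]
          have : ENNReal.ofReal (bndR n) * D
              = ENNReal.ofReal (((m : ℝ) + 1) * Real.exp (a n * (-cJ - η / 2))) := by
            rw [hbndR, hD, ← ENNReal.ofReal_mul (by positivity)]
            congr 1
            rw [mul_assoc, ← Real.exp_add, ← mul_add]
            ring_nf
          rw [this, ENNReal.ofReal_mul (by positivity), hE]
          have : ENNReal.ofReal ((m : ℝ) + 1) = (m : ℝ≥0∞) + 1 := by
            rw [ENNReal.ofReal_add (by positivity) (by norm_num), ENNReal.ofReal_natCast,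
              ENNReal.ofReal_one]
          rw [this]
end

section
/- Let (Ω, F, P) be a probability space, let (X_n) and (Y_n) be sequences of real-valued random variables on Ω such that X_n and Y_n are independent for each n, let (a_n) be positive reals with a_n → ∞, and let 0 < λ < β. Set J(x) = λx²/2, K(x) = βx²/2. Assume the laws of Y_n satisfy the LDP with speed (a_n) and rate function K, and the laws of X_n + Y_n satisfy the LDP with speed (a_n) and rate function J. Fix x ≥ 0 and ε > 0, and set x₀ = βx/(β−λ). Then lim_{n→∞} P(Y_n < x₀ − x and X_n + Y_n ≥ x₀ + ε) / P(X_n + Y_n ≥ x₀ + ε) = 0 (the denominator being strictly positive for all sufficiently large n). -/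
open MeasureTheory ProbabilityTheory Filter Set

section Aux

open scoped ENNReal

lemma coe_mul_add' (r : ℝ) (hr : 0 ≤ r) (p q : EReal) :
    (r : EReal) * (p + q) = (r : EReal) * p + (r : EReal) * q := by
  rcases eq_or_lt_of_le hr with h0 | hrpos
  · simp [← h0]
  · induction p using EReal.rec with
    | bot => simp [EReal.coe_mul_bot_of_pos hrpos]
    | top =>
      induction q using EReal.rec with
      | bot => simp [EReal.coe_mul_bot_of_pos hrpos, EReal.coe_mul_top_of_pos hrpos]
      | top => simp [EReal.coe_mul_top_of_pos hrpos]
      | coe q =>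
        rw [EReal.top_add_coe, EReal.coe_mul_top_of_pos hrpos, ← EReal.coe_mul,
          EReal.top_add_coe]
    | coe p =>
      induction q using EReal.rec with
      | bot => simp [EReal.coe_mul_bot_of_pos hrpos, ← EReal.coe_mul]
      | top => rw [EReal.coe_add_top, EReal.coe_mul_top_of_pos hrpos, ← EReal.coe_mul,
          EReal.coe_add_top]
      | coe q => norm_cast; ring

lemma upper_Ici {μ : ℕ → Measure ℝ} {a : ℕ → ℝ} {I : ℝ → ℝ} (h : SatisfiesLDP μ a I)
    (m b : ℝ) (hb : ∀ y, m ≤ y → b ≤ I y) :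
    limsup (fun n => (((a n)⁻¹ : ℝ) : EReal) * ENNReal.log (μ n (Ici m))) atTop
      ≤ ((-b : ℝ) : EReal) := by
  refine (h.1 (Ici m) isClosed_Ici).trans ?_
  rw [EReal.coe_neg]
  apply EReal.neg_le_neg_iff.2
  exact le_iInf₂ fun y hy => EReal.coe_le_coe_iff.2 (hb y hy)

lemma inf_Ioi_quad (γ m : ℝ) (hγ : 0 ≤ γ) (hm : 0 ≤ m) :
    (⨅ y ∈ Ioi m, ((γ * y ^ 2 / 2 : ℝ) : EReal)) = ((γ * m ^ 2 / 2 : ℝ) : EReal) := by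
  apply le_antisymm
  · have h1 : Tendsto (fun k : ℕ => m + 1 / (k + 1)) atTop (nhds m) := by
      simpa using (tendsto_const_nhds : Tendsto (fun _ : ℕ => m) atTop (nhds m)).add
        (tendsto_one_div_add_atTop_nhds_zero_nat : Tendsto (fun n : ℕ => 1 / ((n : ℝ) + 1)) atTop (nhds 0))
    have h2 : Tendsto (fun k : ℕ => γ * (m + 1 / (k + 1)) ^ 2 / 2) atTop
        (nhds (γ * m ^ 2 / 2)) := by
      exact (((continuous_const.mul (continuous_id.pow 2)).div_const 2).tendsto m).comp h1
    have h3 : Tendsto (fun k : ℕ => ((γ * (m + 1 / (k + 1)) ^ 2 / 2 : ℝ) : EReal)) atTop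
        (nhds ((γ * m ^ 2 / 2 : ℝ) : EReal)) := EReal.tendsto_coe.2 h2
    refine ge_of_tendsto h3 (Eventually.of_forall fun k => ?_)
    refine iInf₂_le (m + 1 / (k + 1)) ?_
    have : (0:ℝ) < 1 / (k + 1) := by positivity
    simpa using this
  · refine le_iInf₂ fun y hy => ?_
    apply EReal.coe_le_coe_iff.2
    have hy' : m ≤ y := le_of_lt hy
    have : m ^ 2 ≤ y ^ 2 := by nlinarith
    nlinarith

lemma lower_Ioi {μ : ℕ → Measure ℝ} {a : ℕ → ℝ} {γ : ℝ} (hγ : 0 ≤ γ)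
    (h : SatisfiesLDP μ a (fun y => γ * y ^ 2 / 2)) (m : ℝ) (hm : 0 ≤ m) :
    ((-(γ * m ^ 2 / 2) : ℝ) : EReal)
      ≤ liminf (fun n => (((a n)⁻¹ : ℝ) : EReal) * ENNReal.log (μ n (Ioi m))) atTop := by
  refine le_trans ?_ (h.2 (Ioi m) isOpen_Ioi)
  have : (⨅ y ∈ Ioi m, (((fun y => γ * y ^ 2 / 2) y : ℝ) : EReal))
      = ((γ * m ^ 2 / 2 : ℝ) : EReal) := inf_Ioi_quad γ m hγ hm
  rw [this, EReal.coe_neg]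

lemma add_real_le (A : EReal) (b c : ℝ) (h : A + (b : EReal) ≤ (c : EReal)) :
    A ≤ ((c - b : ℝ) : EReal) := by
  induction A using EReal.rec with
  | bot => exact bot_le
  | top => rw [EReal.top_add_coe] at h; exact absurd h (by simp)
  | coe A =>
    rw [← EReal.coe_add, EReal.coe_le_coe_iff] at h
    exact EReal.coe_le_coe_iff.2 (by linarith)

lemma tailX {Ω : Type*} [MeasurableSpace Ω] {P : Measure Ω} [IsProbabilityMeasure P]
    {X Y : ℕ → Ω → ℝ}
    (hX : ∀ n, Measurable (X n)) (hY : ∀ n, Measurable (Y n))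
    (hindep : ∀ n, IndepFun (X n) (Y n) P)
    {a : ℕ → ℝ} (ha : ∀ n, 0 < a n)
    {lam β : ℝ} (hlam : 0 < lam) (hβ : 0 < β)
    (hLDPY : SatisfiesLDP (fun n => P.map (Y n)) a (fun y => β * y ^ 2 / 2))
    (hLDPXY : SatisfiesLDP (fun n => P.map (fun ω => X n ω + Y n ω)) a
      (fun y => lam * y ^ 2 / 2))
    (m s : ℝ) (hm : 0 < m) (hs : 0 < s) :
    limsup (fun n => (((a n)⁻¹ : ℝ) : EReal) * ENNReal.log (P (X n ⁻¹' Ici m))) atTop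
      ≤ ((β * s ^ 2 / 2 - lam * (m + s) ^ 2 / 2 : ℝ) : EReal) := by
  have hmapY : ∀ n, (P.map (Y n)) (Ioi s) = P (Y n ⁻¹' Ioi s) := fun n =>
    Measure.map_apply (hY n) measurableSet_Ioi
  have hmapZ : ∀ n, (P.map (fun ω => X n ω + Y n ω)) (Ici (m + s))
      = P ((fun ω => X n ω + Y n ω) ⁻¹' Ici (m + s)) := fun n =>
    Measure.map_apply ((hX n).add (hY n)) measurableSet_Ici
  have hZ : limsup (fun n => (((a n)⁻¹ : ℝ) : EReal)
      * ENNReal.log (P ((fun ω => X n ω + Y n ω) ⁻¹' Ici (m + s)))) atTop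
      ≤ ((-(lam * (m + s) ^ 2 / 2) : ℝ) : EReal) := by
    have hb : ∀ y, m + s ≤ y → lam * (m + s) ^ 2 / 2 ≤ (fun y => lam * y ^ 2 / 2) y := by
      intro y hy
      change lam * (m + s) ^ 2 / 2 ≤ lam * y ^ 2 / 2
      nlinarith [mul_nonneg (sub_nonneg.2 hy) (by linarith : (0:ℝ) ≤ y + (m + s))]
    have := upper_Ici hLDPXY (m + s) (lam * (m + s) ^ 2 / 2) hb
    simpa only [hmapZ] using this
  have hYlow : ((-(β * s ^ 2 / 2) : ℝ) : EReal)
      ≤ liminf (fun n => (((a n)⁻¹ : ℝ) : EReal) * ENNReal.log (P (Y n ⁻¹' Ioi s))) atTop := by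
    have := lower_Ioi (le_of_lt hβ) hLDPY s (le_of_lt hs)
    simpa only [hmapY] using this
  have hpt : ∀ n, (((a n)⁻¹ : ℝ) : EReal) * ENNReal.log (P (X n ⁻¹' Ici m))
      + (((a n)⁻¹ : ℝ) : EReal) * ENNReal.log (P (Y n ⁻¹' Ioi s))
      ≤ (((a n)⁻¹ : ℝ) : EReal)
        * ENNReal.log (P ((fun ω => X n ω + Y n ω) ⁻¹' Ici (m + s))) := by
    intro n
    have hinv : (0:ℝ) ≤ (a n)⁻¹ := le_of_lt (inv_pos.2 (ha n))
    rw [← coe_mul_add' _ hinv, ← ENNReal.log_mul_add]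
    apply mul_le_mul_of_nonneg_left _ (by exact_mod_cast hinv)
    apply ENNReal.log_monotone
    rw [← (hindep n).measure_inter_preimage_eq_mul _ _ measurableSet_Ici measurableSet_Ioi]
    apply measure_mono
    rintro ω ⟨h1, h2⟩
    have h1' : m ≤ X n ω := h1
    have h2' : s < Y n ω := h2
    simp only [mem_preimage, mem_Ici]
    linarith
  have hcomb : limsup (fun n => (((a n)⁻¹ : ℝ) : EReal) * ENNReal.log (P (X n ⁻¹' Ici m))) atTop
      + ((-(β * s ^ 2 / 2) : ℝ) : EReal) ≤ ((-(lam * (m + s) ^ 2 / 2) : ℝ) : EReal) := by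
    calc limsup (fun n => (((a n)⁻¹ : ℝ) : EReal) * ENNReal.log (P (X n ⁻¹' Ici m))) atTop
        + ((-(β * s ^ 2 / 2) : ℝ) : EReal)
        ≤ limsup (fun n => (((a n)⁻¹ : ℝ) : EReal) * ENNReal.log (P (X n ⁻¹' Ici m))) atTop
          + liminf (fun n => (((a n)⁻¹ : ℝ) : EReal) * ENNReal.log (P (Y n ⁻¹' Ioi s))) atTop :=
          add_le_add_right hYlow _
      _ ≤ limsup (fun n => (((a n)⁻¹ : ℝ) : EReal) * ENNReal.log (P (X n ⁻¹' Ici m))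
            + (((a n)⁻¹ : ℝ) : EReal) * ENNReal.log (P (Y n ⁻¹' Ioi s))) atTop :=
          EReal.le_limsup_add
      _ ≤ limsup (fun n => (((a n)⁻¹ : ℝ) : EReal)
            * ENNReal.log (P ((fun ω => X n ω + Y n ω) ⁻¹' Ici (m + s)))) atTop :=
          limsup_le_limsup (Eventually.of_forall hpt)
      _ ≤ _ := hZ
  have := add_real_le _ _ _ hcomb
  convert this using 2
  ring

lemma tailY {Ω : Type*} [MeasurableSpace Ω] {P : Measure Ω} [IsProbabilityMeasure P]
    {Y : ℕ → Ω → ℝ} (hY : ∀ n, Measurable (Y n)) {a : ℕ → ℝ}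
    {β : ℝ} (hβ : 0 < β)
    (hLDPY : SatisfiesLDP (fun n => P.map (Y n)) a (fun y => β * y ^ 2 / 2))
    (ℓ : ℝ) :
    limsup (fun n => (((a n)⁻¹ : ℝ) : EReal) * ENNReal.log (P (Y n ⁻¹' Ici ℓ))) atTop
      ≤ ((-(β * max ℓ 0 ^ 2 / 2) : ℝ) : EReal) := by
  have hmapY : ∀ n, (P.map (Y n)) (Ici ℓ) = P (Y n ⁻¹' Ici ℓ) := fun n =>
    Measure.map_apply (hY n) measurableSet_Ici
  have hb : ∀ y, ℓ ≤ y → β * max ℓ 0 ^ 2 / 2 ≤ (fun y => β * y ^ 2 / 2) y := by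
    intro y hy
    change β * max ℓ 0 ^ 2 / 2 ≤ β * y ^ 2 / 2
    rcases le_total ℓ 0 with h | h
    · rw [max_eq_right h]; nlinarith [sq_nonneg y, hβ.le]
    · rw [max_eq_left h]
      nlinarith [mul_nonneg (sub_nonneg.2 hy) (by linarith : (0:ℝ) ≤ y + ℓ)]
  have := upper_Ici hLDPY ℓ (β * max ℓ 0 ^ 2 / 2) hb
  simpa only [hmapY] using this

lemma rect_bound {Ω : Type*} [MeasurableSpace Ω] {P : Measure Ω} [IsProbabilityMeasure P]
    {X Y : ℕ → Ω → ℝ}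
    (hX : ∀ n, Measurable (X n)) (hY : ∀ n, Measurable (Y n))
    (hindep : ∀ n, IndepFun (X n) (Y n) P)
    {a : ℕ → ℝ} (ha : ∀ n, 0 < a n)
    {lam β : ℝ} (hlam : 0 < lam) (hβ : 0 < β)
    (hLDPY : SatisfiesLDP (fun n => P.map (Y n)) a (fun y => β * y ^ 2 / 2))
    (hLDPXY : SatisfiesLDP (fun n => P.map (fun ω => X n ω + Y n ω)) a
      (fun y => lam * y ^ 2 / 2))
    (ℓ m s : ℝ) (hm : 0 < m) (hs : 0 < s) :
    limsup (fun n => (((a n)⁻¹ : ℝ) : EReal)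
        * ENNReal.log (P (Y n ⁻¹' Ici ℓ ∩ X n ⁻¹' Ici m))) atTop
      ≤ ((-(β * max ℓ 0 ^ 2 / 2) + (β * s ^ 2 / 2 - lam * (m + s) ^ 2 / 2) : ℝ) : EReal) := by
  have hXb := tailX hX hY hindep ha hlam hβ hLDPY hLDPXY m s hm hs
  have hYb := tailY hY hβ hLDPY (a := a) ℓ
  have hprod : ∀ n, P (Y n ⁻¹' Ici ℓ ∩ X n ⁻¹' Ici m)
      = P (Y n ⁻¹' Ici ℓ) * P (X n ⁻¹' Ici m) := by
    intro n
    rw [Set.inter_comm, (hindep n).measure_inter_preimage_eq_mul _ _ measurableSet_Ici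
      measurableSet_Ici, mul_comm]
  have hpt : ∀ n, (((a n)⁻¹ : ℝ) : EReal) * ENNReal.log (P (Y n ⁻¹' Ici ℓ ∩ X n ⁻¹' Ici m))
      = (((a n)⁻¹ : ℝ) : EReal) * ENNReal.log (P (Y n ⁻¹' Ici ℓ))
        + (((a n)⁻¹ : ℝ) : EReal) * ENNReal.log (P (X n ⁻¹' Ici m)) := by
    intro n
    rw [hprod n, ENNReal.log_mul_add, coe_mul_add' _ (le_of_lt (inv_pos.2 (ha n)))]
  calc limsup (fun n => (((a n)⁻¹ : ℝ) : EReal)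
        * ENNReal.log (P (Y n ⁻¹' Ici ℓ ∩ X n ⁻¹' Ici m))) atTop
      = limsup (fun n => (((a n)⁻¹ : ℝ) : EReal) * ENNReal.log (P (Y n ⁻¹' Ici ℓ))
        + (((a n)⁻¹ : ℝ) : EReal) * ENNReal.log (P (X n ⁻¹' Ici m))) atTop := by
        apply limsup_congr (Eventually.of_forall hpt)
    _ ≤ limsup (fun n => (((a n)⁻¹ : ℝ) : EReal) * ENNReal.log (P (Y n ⁻¹' Ici ℓ))) atTop
        + limsup (fun n => (((a n)⁻¹ : ℝ) : EReal) * ENNReal.log (P (X n ⁻¹' Ici m))) atTop := by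
        apply EReal.limsup_add_le
        · right; exact (hXb.trans_lt (EReal.coe_lt_top _)).ne
        · left; exact (hYb.trans_lt (EReal.coe_lt_top _)).ne
    _ ≤ ((-(β * max ℓ 0 ^ 2 / 2) : ℝ) : EReal)
        + ((β * s ^ 2 / 2 - lam * (m + s) ^ 2 / 2 : ℝ) : EReal) := add_le_add hYb hXb
    _ = _ := by rw [← EReal.coe_add]

lemma limsup_log_add (a : ℕ → ℝ) (ha : ∀ n, 0 < a n) (ha' : Tendsto a atTop atTop)
    (f g : ℕ → ℝ≥0∞) (L : ℝ)
    (hf : limsup (fun n => (((a n)⁻¹ : ℝ) : EReal) * ENNReal.log (f n)) atTop ≤ (L : EReal))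
    (hg : limsup (fun n => (((a n)⁻¹ : ℝ) : EReal) * ENNReal.log (g n)) atTop ≤ (L : EReal)) :
    limsup (fun n => (((a n)⁻¹ : ℝ) : EReal) * ENNReal.log (f n + g n)) atTop ≤ (L : EReal) := by
  set F : ℕ → EReal := fun n => (((a n)⁻¹ : ℝ) : EReal) * ENNReal.log (f n) with hF
  set G : ℕ → EReal := fun n => (((a n)⁻¹ : ℝ) : EReal) * ENNReal.log (g n) with hG
  set c : ℕ → EReal := fun n => (((a n)⁻¹ * Real.log 2 : ℝ) : EReal) with hc
  have hpt : ∀ n, (((a n)⁻¹ : ℝ) : EReal) * ENNReal.log (f n + g n) ≤ c n + max (F n) (G n) := by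
    intro n
    have hinv : (0:ℝ) ≤ (a n)⁻¹ := le_of_lt (inv_pos.2 (ha n))
    have hle : f n + g n ≤ 2 * max (f n) (g n) := by
      rcases le_total (f n) (g n) with h | h
      · rw [max_eq_right h, two_mul]; exact add_le_add_left h _
      · rw [max_eq_left h, two_mul]; exact add_le_add_right h _
    have h2 : ENNReal.log (f n + g n)
        ≤ ENNReal.log 2 + max (ENNReal.log (f n)) (ENNReal.log (g n)) := by
      calc ENNReal.log (f n + g n) ≤ ENNReal.log (2 * max (f n) (g n)) :=
            ENNReal.log_monotone hle
        _ = ENNReal.log 2 + ENNReal.log (max (f n) (g n)) := ENNReal.log_mul_add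
        _ = ENNReal.log 2 + max (ENNReal.log (f n)) (ENNReal.log (g n)) := by
            rw [ENNReal.log_monotone.map_max]
    calc (((a n)⁻¹ : ℝ) : EReal) * ENNReal.log (f n + g n)
        ≤ (((a n)⁻¹ : ℝ) : EReal)
            * (ENNReal.log 2 + max (ENNReal.log (f n)) (ENNReal.log (g n))) :=
          mul_le_mul_of_nonneg_left h2 (by exact_mod_cast hinv)
      _ = (((a n)⁻¹ : ℝ) : EReal) * ENNReal.log 2
            + (((a n)⁻¹ : ℝ) : EReal) * max (ENNReal.log (f n)) (ENNReal.log (g n)) :=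
          coe_mul_add' _ hinv _ _
      _ ≤ c n + max (F n) (G n) := by
          apply add_le_add
          · have : ENNReal.log 2 = ((Real.log 2 : ℝ) : EReal) := by
              rw [show (2:ℝ≥0∞) = ENNReal.ofReal 2 by simp]
              exact ENNReal.log_ofReal_of_pos (by norm_num)
            rw [this, hc, ← EReal.coe_mul]
          · rcases le_total (ENNReal.log (f n)) (ENNReal.log (g n)) with h | h
            · rw [max_eq_right h]
              exact le_max_of_le_right le_rfl
            · rw [max_eq_left h]
              exact le_max_of_le_left le_rfl
  have hclim : Tendsto c atTop (nhds (0 : EReal)) := by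
    have : Tendsto (fun n => (a n)⁻¹ * Real.log 2) atTop (nhds (0 * Real.log 2)) :=
      (tendsto_inv_atTop_zero.comp ha').mul_const _
    rw [zero_mul] at this
    exact EReal.tendsto_coe.2 this
  calc limsup (fun n => (((a n)⁻¹ : ℝ) : EReal) * ENNReal.log (f n + g n)) atTop
      ≤ limsup (fun n => c n + max (F n) (G n)) atTop :=
        limsup_le_limsup (Eventually.of_forall hpt)
    _ ≤ limsup c atTop + limsup (fun n => max (F n) (G n)) atTop := by
        apply EReal.limsup_add_le
        · left; rw [hclim.limsup_eq]; simp
        · left; rw [hclim.limsup_eq]; simp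
    _ = limsup (fun n => max (F n) (G n)) atTop := by rw [hclim.limsup_eq, zero_add]
    _ = max (limsup F atTop) (limsup G atTop) := limsup_max
    _ ≤ (L : EReal) := max_le hf hg

lemma limsup_log_sum (a : ℕ → ℝ) (ha : ∀ n, 0 < a n) (ha' : Tendsto a atTop atTop)
    (N : ℕ) (f : ℕ → ℕ → ℝ≥0∞) (L : ℝ)
    (hf : ∀ i, i ≤ N →
      limsup (fun n => (((a n)⁻¹ : ℝ) : EReal) * ENNReal.log (f i n)) atTop ≤ (L : EReal)) :
    limsup (fun n => (((a n)⁻¹ : ℝ) : EReal) * ENNReal.log (∑ i ∈ Finset.range N, f i n)) atTop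
      ≤ (L : EReal) := by
  induction N with
  | zero =>
    have : ∀ n, (((a n)⁻¹ : ℝ) : EReal) * ENNReal.log (∑ i ∈ Finset.range 0, f i n) = ⊥ := by
      intro n
      rw [Finset.sum_range_zero, ENNReal.log_zero, EReal.coe_mul_bot_of_pos (inv_pos.2 (ha n))]
    rw [limsup_congr (Eventually.of_forall this)]
    simpa using bot_le
  | succ N ih =>
    have hsum : ∀ n, (∑ i ∈ Finset.range (N+1), f i n)
        = (∑ i ∈ Finset.range N, f i n) + f N n := by
      intro n; rw [Finset.sum_range_succ]
    rw [limsup_congr (Eventually.of_forall (fun n => by rw [hsum n]))]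
    exact limsup_log_add a ha ha' _ _ L
      (ih (fun i hi => hf i (hi.trans (Nat.le_succ N))))
      (hf N (Nat.le_succ N))

lemma pt_ineq (lam β u c ε G y' : ℝ) (hlam : 0 < lam) (hβl : 0 < β - lam) (hε : 0 < ε)
    (hβu : β * u = lam * c - lam * ε) (hG : G = lam ^ 2 * ε ^ 2 / (2 * (β - lam)))
    (h0 : 0 ≤ y') (h1 : y' ≤ u) :
    lam * c ^ 2 / 2 + G ≤ β * y' ^ 2 / 2 + lam * β * (c - y') ^ 2 / (2 * (β - lam)) := by
  have hβ0 : (0:ℝ) < β := by linarith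
  have hby : β * y' ≤ β * u := mul_le_mul_of_nonneg_left h1 hβ0.le
  have hkey : β * y' - lam * c + lam * ε ≤ 0 := by linarith
  have hkey2 : β * y' - lam * c - lam * ε ≤ 0 := by nlinarith [mul_pos hlam hε]
  have hprod : 0 ≤ (-(β * y' - lam * c + lam * ε)) * (-(β * y' - lam * c - lam * ε)) :=
    mul_nonneg (by linarith) (by linarith)
  have hsq : (lam * ε) ^ 2 ≤ (β * y' - lam * c) ^ 2 := by nlinarith [hprod]
  have hpoly : (β - lam) * lam * c ^ 2 + lam ^ 2 * ε ^ 2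
      ≤ (β - lam) * β * y' ^ 2 + lam * β * (c - y') ^ 2 := by nlinarith [hsq]
  have h2βl : (0:ℝ) < 2 * (β - lam) := by linarith
  have hdiv := (div_le_div_iff_of_pos_right h2βl).2 hpoly
  have eL : ((β - lam) * lam * c ^ 2 + lam ^ 2 * ε ^ 2) / (2 * (β - lam))
      = lam * c ^ 2 / 2 + G := by rw [hG]; field_simp
  have eR : ((β - lam) * β * y' ^ 2 + lam * β * (c - y') ^ 2) / (2 * (β - lam))
      = β * y' ^ 2 / 2 + lam * β * (c - y') ^ 2 / (2 * (β - lam)) := by field_simp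
  rw [eL, eR] at hdiv
  exact hdiv

lemma core_ineq (lam β x ε u t c G h : ℝ) (hlam : 0 < lam) (hlamβ : lam < β)
    (hx : 0 ≤ x) (hε : 0 < ε)
    (hu : u = lam * x / (β - lam)) (ht : t = x + ε) (hc : c = u + t)
    (hG : G = lam ^ 2 * ε ^ 2 / (2 * (β - lam)))
    (hh : h = min 1 (G / (2 * β * u + 2 * β + 1))) (i : ℕ) :
    -(β * max (u - (i + 1) * h) 0 ^ 2 / 2)
        + (β * (lam * (t + i * h) / (β - lam)) ^ 2 / 2
          - lam * ((t + i * h) + lam * (t + i * h) / (β - lam)) ^ 2 / 2)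
      ≤ ((-(lam * c ^ 2 / 2 + G / 2)) : ℝ) := by
  have hβl : (0:ℝ) < β - lam := by linarith
  have hβ0 : (0:ℝ) < β := by linarith
  have hu0 : 0 ≤ u := by rw [hu]; positivity
  have ht0 : 0 < t := by rw [ht]; linarith
  have hG0 : 0 < G := by rw [hG]; positivity
  have hden : (0:ℝ) < 2 * β * u + 2 * β + 1 := by positivity
  have hh0 : 0 < h := by rw [hh]; exact lt_min one_pos (by positivity)
  have hh1 : h ≤ 1 := by rw [hh]; exact min_le_left _ _
  have hhq : h * (2 * β * u + 2 * β + 1) ≤ G := by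
    have := min_le_right 1 (G / (2 * β * u + 2 * β + 1))
    rw [← hh] at this
    calc h * (2 * β * u + 2 * β + 1)
        ≤ (G / (2 * β * u + 2 * β + 1)) * (2 * β * u + 2 * β + 1) :=
          mul_le_mul_of_nonneg_right this (le_of_lt hden)
      _ = G := by field_simp
  have hG1 : β * u * h ≤ G / 2 := by nlinarith [mul_pos hβ0 hh0]
  have hG2 : β * h ^ 2 / 2 ≤ G / 4 := by nlinarith [mul_pos hβ0 (mul_pos hh0 hh0)]
  have hIX : β * (lam * (t + i * h) / (β - lam)) ^ 2 / 2
      - lam * ((t + i * h) + lam * (t + i * h) / (β - lam)) ^ 2 / 2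
      = -(lam * β * (t + i * h) ^ 2 / (2 * (β - lam))) := by
    field_simp
    ring
  rw [hIX]
  set y : ℝ := u - i * h with hy
  have hmy : t + i * h = c - y := by rw [hc, hy]; ring
  rw [hmy]
  have hyu : y ≤ u := by
    have : (0:ℝ) ≤ i * h := mul_nonneg (Nat.cast_nonneg i) (le_of_lt hh0)
    rw [hy]; linarith
  have hβu : β * u = lam * (c - ε) := by
    rw [hu, hc, ht, hu]; field_simp; ring
  have hcε : ε ≤ c := by
    rw [hc, ht]; linarith
  have hβu2 : β * u = lam * c - lam * ε := by rw [hβu]; ring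
  have PT : ∀ y' : ℝ, 0 ≤ y' → y' ≤ u →
      lam * c ^ 2 / 2 + G ≤ β * y' ^ 2 / 2 + lam * β * (c - y') ^ 2 / (2 * (β - lam)) :=
    fun y' h0 h1 => pt_ineq lam β u c ε G y' hlam hβl hε hβu2 hG h0 h1
  have hml : u - (i + 1) * h = y - h := by rw [hy]; ring
  rw [hml]
  clear_value y
  clear hml hmy hβu hβu2 hhq hden hh hu ht hG hc hy hx hlamβ hIX
  rcases lt_or_ge y 0 with hyneg | hypos
  · rw [max_eq_right (by linarith : y - h ≤ 0)]
    have hPT0 := PT 0 le_rfl hu0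
    simp only [sub_zero] at hPT0
    norm_num at hPT0
    have hsq : c ^ 2 ≤ (c - y) ^ 2 := by nlinarith [hcε, hε]
    have hsq' : lam * β * c ^ 2 ≤ lam * β * (c - y) ^ 2 :=
      mul_le_mul_of_nonneg_left hsq (mul_pos hlam hβ0).le
    have hmono : lam * β * c ^ 2 / (2 * (β - lam)) ≤ lam * β * (c - y) ^ 2 / (2 * (β - lam)) :=
      (div_le_div_iff_of_pos_right (by linarith)).2 hsq'
    linarith [hPT0, hmono]
  · rcases lt_or_ge (y - h) 0 with hlneg | hlpos
    · rw [max_eq_right (by linarith : y - h ≤ 0)]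
      have hPT := PT y hypos hyu
      have hy2 : y ^ 2 ≤ h ^ 2 := by nlinarith
      have : β * y ^ 2 / 2 ≤ G / 4 := by nlinarith
      linarith [hPT]
    · rw [max_eq_left (by linarith : 0 ≤ y - h)]
      have hPT := PT y (by linarith) hyu
      have hkey : h * (2 * y - h) ≤ h * (2 * u) :=
        mul_le_mul_of_nonneg_left (by linarith) hh0.le
      have hk2 : β * (h * (2 * y - h)) ≤ β * (h * (2 * u)) :=
        mul_le_mul_of_nonneg_left hkey hβ0.le
      linarith [hPT, hk2, hG1]

end Aux

open scoped ENNReal in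
/-- Under LDPs for the laws of `Y_n` (rate `K x = βx²/2`) and of
`X_n + Y_n` (rate `J x = λx²/2`), with `X_n, Y_n` independent, `a_n → ∞` positive,
`0 < λ < β`, `x ≥ 0`, `ε > 0` and `x₀ = βx/(β−λ)`: the conditional probability
`P(Y_n < x₀ − x and X_n + Y_n ≥ x₀ + ε) / P(X_n + Y_n ≥ x₀ + ε)` tends to `0`, the
denominator being strictly positive for all sufficiently large `n`. -/
theorem stmt10 {Ω : Type*} [MeasurableSpace Ω] (P : Measure Ω) [IsProbabilityMeasure P]
    (X Y : ℕ → Ω → ℝ) (hX : ∀ n, Measurable (X n)) (hY : ∀ n, Measurable (Y n))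
    (hindep : ∀ n, IndepFun (X n) (Y n) P)
    (a : ℕ → ℝ) (ha : ∀ n, 0 < a n) (ha' : Tendsto a atTop atTop)
    (lam β : ℝ) (hlam : 0 < lam) (hlamβ : lam < β)
    (J K : ℝ → ℝ)
    (hJ : J = fun x => lam * x ^ 2 / 2)
    (hK : K = fun x => β * x ^ 2 / 2)
    (hLDPY : SatisfiesLDP (fun n => P.map (Y n)) a K)
    (hLDPXY : SatisfiesLDP (fun n => P.map (fun ω => X n ω + Y n ω)) a J)
    (x : ℝ) (hx : 0 ≤ x) (ε : ℝ) (hε : 0 < ε)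
    (x₀ : ℝ) (hx₀ : x₀ = β * x / (β - lam)) :
    (∀ᶠ n in atTop, 0 < P {ω | x₀ + ε ≤ X n ω + Y n ω}) ∧
    Tendsto
      (fun n =>
        P {ω | Y n ω < x₀ - x ∧ x₀ + ε ≤ X n ω + Y n ω} /
          P {ω | x₀ + ε ≤ X n ω + Y n ω})
      atTop (nhds 0) := by
  subst hJ hK hx₀
  have hβl : (0:ℝ) < β - lam := by linarith
  have hβ0 : (0:ℝ) < β := by linarith
  set u : ℝ := lam * x / (β - lam) with hu
  set t : ℝ := x + ε with ht
  set c : ℝ := u + t with hc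
  set G : ℝ := lam ^ 2 * ε ^ 2 / (2 * (β - lam)) with hG
  set mesh : ℝ := min 1 (G / (2 * β * u + 2 * β + 1)) with hmesh
  have hu0 : 0 ≤ u := by rw [hu]; positivity
  have ht0 : 0 < t := by rw [ht]; linarith
  have hc0 : 0 < c := by rw [hc]; linarith
  have hG0 : 0 < G := by rw [hG]; positivity
  have hmesh0 : 0 < mesh := by
    rw [hmesh]
    have : (0:ℝ) < 2 * β * u + 2 * β + 1 := by positivity
    exact lt_min one_pos (by positivity)
  have hβu2 : β * u = lam * c - lam * ε := by rw [hu, hc, ht, hu]; field_simp; ring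
  have hx0x : β * x / (β - lam) - x = u := by rw [hu]; field_simp; ring
  have hx0e : β * x / (β - lam) + ε = c := by rw [hc, hu, ht]; field_simp; ring
  rw [hx0x, hx0e]
  -- abbreviations
  set N : ℕ := ⌈u / mesh⌉₊ + 1 with hN
  -- denominator lower bound
  have hdenlow : ((-(lam * c ^ 2 / 2) : ℝ) : EReal)
      ≤ liminf (fun n => (((a n)⁻¹ : ℝ) : EReal)
          * ENNReal.log (P {ω | c ≤ X n ω + Y n ω})) atTop := by
    refine (lower_Ioi hlam.le hLDPXY c hc0.le).trans
      (liminf_le_liminf (Eventually.of_forall fun n => ?_))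
    have hmap : (P.map (fun ω => X n ω + Y n ω)) (Ioi c)
        = P ((fun ω => X n ω + Y n ω) ⁻¹' Ioi c) :=
      Measure.map_apply ((hX n).add (hY n)) measurableSet_Ioi
    rw [hmap]
    have hinv : (0 : EReal) ≤ (((a n)⁻¹ : ℝ) : EReal) := by
      exact_mod_cast le_of_lt (inv_pos.2 (ha n))
    have hsubden : (fun ω => X n ω + Y n ω) ⁻¹' Ioi c ⊆ {ω | c ≤ X n ω + Y n ω} := by
      intro ω hω
      simp only [mem_preimage, mem_Ioi] at hω
      simp only [mem_setOf_eq]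
      exact le_of_lt hω
    exact mul_le_mul_of_nonneg_left (ENNReal.log_monotone (measure_mono hsubden)) hinv
  -- eventual positivity of the denominator
  have hpos : ∀ᶠ n in atTop, 0 < P {ω | c ≤ X n ω + Y n ω} := by
    have hlt : ((-(lam * c ^ 2 / 2) - 1 : ℝ) : EReal)
        < liminf (fun n => (((a n)⁻¹ : ℝ) : EReal)
            * ENNReal.log (P {ω | c ≤ X n ω + Y n ω})) atTop :=
      lt_of_lt_of_le (EReal.coe_lt_coe_iff.2 (by linarith)) hdenlow
    filter_upwards [eventually_lt_of_lt_liminf hlt] with n hn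
    rw [pos_iff_ne_zero]
    intro h0
    rw [h0, ENNReal.log_zero, EReal.coe_mul_bot_of_pos (inv_pos.2 (ha n))] at hn
    exact absurd hn (by simp)
  refine ⟨hpos, ?_⟩
  -- numerator pieces
  set L : ℝ := -(lam * c ^ 2 / 2 + G / 2) with hL
  -- piece 0 : X ≥ c
  have hp0 : limsup (fun n => (((a n)⁻¹ : ℝ) : EReal)
      * ENNReal.log (P (X n ⁻¹' Ici c))) atTop ≤ (L : EReal) := by
    have hs0 : 0 < lam * c / (β - lam) := by positivity
    have htail := tailX hX hY hindep ha hlam hβ0 hLDPY hLDPXY c (lam * c / (β - lam)) hc0 hs0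
    refine htail.trans (EReal.coe_le_coe_iff.2 ?_)
    have hIc : β * (lam * c / (β - lam)) ^ 2 / 2 - lam * (c + lam * c / (β - lam)) ^ 2 / 2
        = -(lam * β * c ^ 2 / (2 * (β - lam))) := by field_simp; ring
    have hpt0 := pt_ineq lam β u c ε G 0 hlam hβl hε hβu2 hG le_rfl hu0
    simp only [sub_zero] at hpt0
    norm_num at hpt0
    rw [hIc, hL]
    linarith only [hpt0, hG0]
  -- rectangle pieces
  have hrect : ∀ i : ℕ, limsup (fun n => (((a n)⁻¹ : ℝ) : EReal)
      * ENNReal.log (P (Y n ⁻¹' Ici (u - (i + 1) * mesh) ∩ X n ⁻¹' Ici (t + i * mesh)))) atTop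
      ≤ (L : EReal) := by
    intro i
    have hm : 0 < t + i * mesh :=
      add_pos_of_pos_of_nonneg ht0 (mul_nonneg (Nat.cast_nonneg i) hmesh0.le)
    have hs : 0 < lam * (t + i * mesh) / (β - lam) := div_pos (mul_pos hlam hm) hβl
    have := rect_bound hX hY hindep ha hlam hβ0 hLDPY hLDPXY
      (u - (i + 1) * mesh) (t + i * mesh) (lam * (t + i * mesh) / (β - lam)) hm hs
    refine this.trans (EReal.coe_le_coe_iff.2 ?_)
    rw [hL]
    exact core_ineq lam β x ε u t c G mesh hlam hlamβ hx hε hu ht hc hG hmesh i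
  -- cover of the numerator event
  have hcover : ∀ n, P {ω | Y n ω < u ∧ c ≤ X n ω + Y n ω}
      ≤ P (X n ⁻¹' Ici c)
        + ∑ i ∈ Finset.range N,
            P (Y n ⁻¹' Ici (u - (i + 1) * mesh) ∩ X n ⁻¹' Ici (t + i * mesh)) := by
    intro n
    have hsub : {ω | Y n ω < u ∧ c ≤ X n ω + Y n ω}
        ⊆ (X n ⁻¹' Ici c)
          ∪ ⋃ i ∈ Finset.range N,
              (Y n ⁻¹' Ici (u - (i + 1) * mesh) ∩ X n ⁻¹' Ici (t + i * mesh)) := by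
      rintro ω ⟨hY1, hZ1⟩
      rcases lt_or_ge (Y n ω) 0 with hneg | hpos'
      · left
        simp only [mem_preimage, mem_Ici]
        linarith
      · right
        have hq0 : 0 ≤ (u - Y n ω) / mesh := div_nonneg (by linarith) hmesh0.le
        set i : ℕ := ⌊(u - Y n ω) / mesh⌋₊ with hi
        have hiq : (i : ℝ) ≤ (u - Y n ω) / mesh := Nat.floor_le hq0
        have hqi : (u - Y n ω) / mesh < i + 1 := Nat.lt_floor_add_one _
        have hih : (i : ℝ) * mesh ≤ u - Y n ω := by
          rw [← le_div_iff₀ hmesh0]; exact hiq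
        have hY2 : u - (i + 1) * mesh ≤ Y n ω := by
          have h3' := (div_lt_iff₀ hmesh0).1 hqi
          linarith only [h3']
        have hX2 : t + i * mesh ≤ X n ω := by
          have : Y n ω ≤ u - i * mesh := by linarith
          have hcut : c = u + t := hc
          linarith
        have hiN : i < N := by
          have h1' : (u - Y n ω) / mesh ≤ u / mesh := by
            apply div_le_div_of_nonneg_right ?_ hmesh0.le <;> linarith
          have h2' : i ≤ ⌈u / mesh⌉₊ :=
            le_trans (Nat.floor_le_floor h1') (Nat.floor_le_ceil _)
          rw [hN]
          exact Nat.lt_succ_of_le h2'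
        refine mem_biUnion (Finset.mem_range.2 hiN) ?_
        exact ⟨by simpa using hY2, by simpa using hX2⟩
    calc P {ω | Y n ω < u ∧ c ≤ X n ω + Y n ω}
        ≤ P ((X n ⁻¹' Ici c)
          ∪ ⋃ i ∈ Finset.range N,
              (Y n ⁻¹' Ici (u - (i + 1) * mesh) ∩ X n ⁻¹' Ici (t + i * mesh))) :=
          measure_mono hsub
      _ ≤ P (X n ⁻¹' Ici c)
          + P (⋃ i ∈ Finset.range N,
              (Y n ⁻¹' Ici (u - (i + 1) * mesh) ∩ X n ⁻¹' Ici (t + i * mesh))) :=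
          measure_union_le _ _
      _ ≤ _ := by
          apply add_le_add_right
          exact measure_biUnion_finset_le _ _
  -- numerator limsup bound
  have hnum : limsup (fun n => (((a n)⁻¹ : ℝ) : EReal)
      * ENNReal.log (P {ω | Y n ω < u ∧ c ≤ X n ω + Y n ω})) atTop ≤ (L : EReal) := by
    have hsum := limsup_log_sum a ha ha' N
      (fun i n => P (Y n ⁻¹' Ici (u - (i + 1) * mesh) ∩ X n ⁻¹' Ici (t + i * mesh))) L
      (fun i _ => hrect i)
    have hadd := limsup_log_add a ha ha' _ _ L hp0 hsum
    refine le_trans (limsup_le_limsup (Eventually.of_forall fun n => ?_)) hadd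
    exact mul_le_mul_of_nonneg_left (ENNReal.log_monotone (hcover n))
      (by exact_mod_cast (le_of_lt (inv_pos.2 (ha n))))
  -- ratio limsup bound
  have hratio : limsup (fun n => (((a n)⁻¹ : ℝ) : EReal)
      * ENNReal.log (P {ω | Y n ω < u ∧ c ≤ X n ω + Y n ω}
          / P {ω | c ≤ X n ω + Y n ω})) atTop ≤ ((-(G / 2) : ℝ) : EReal) := by
    have hlogr : ∀ n, (((a n)⁻¹ : ℝ) : EReal)
        * ENNReal.log (P {ω | Y n ω < u ∧ c ≤ X n ω + Y n ω} / P {ω | c ≤ X n ω + Y n ω})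
        = (((a n)⁻¹ : ℝ) : EReal) * ENNReal.log (P {ω | Y n ω < u ∧ c ≤ X n ω + Y n ω})
          + -((((a n)⁻¹ : ℝ) : EReal) * ENNReal.log (P {ω | c ≤ X n ω + Y n ω})) := by
      intro n
      rw [div_eq_mul_inv, ENNReal.log_mul_add, ENNReal.log_inv,
        coe_mul_add' _ (le_of_lt (inv_pos.2 (ha n))), mul_neg]
    rw [limsup_congr (Eventually.of_forall hlogr)]
    have hneg : limsup (fun n =>
        -((((a n)⁻¹ : ℝ) : EReal) * ENNReal.log (P {ω | c ≤ X n ω + Y n ω}))) atTop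
        ≤ ((lam * c ^ 2 / 2 : ℝ) : EReal) := by
      have : (fun n => -((((a n)⁻¹ : ℝ) : EReal) * ENNReal.log (P {ω | c ≤ X n ω + Y n ω})))
          = -(fun n => (((a n)⁻¹ : ℝ) : EReal) * ENNReal.log (P {ω | c ≤ X n ω + Y n ω})) := rfl
      rw [this, EReal.limsup_neg]
      calc -(liminf (fun n => (((a n)⁻¹ : ℝ) : EReal)
            * ENNReal.log (P {ω | c ≤ X n ω + Y n ω})) atTop)
          ≤ -((-(lam * c ^ 2 / 2) : ℝ) : EReal) := EReal.neg_le_neg_iff.2 hdenlow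
        _ = ((lam * c ^ 2 / 2 : ℝ) : EReal) := by rw [← EReal.coe_neg]; norm_num
    calc limsup (fun n =>
          (((a n)⁻¹ : ℝ) : EReal) * ENNReal.log (P {ω | Y n ω < u ∧ c ≤ X n ω + Y n ω})
          + -((((a n)⁻¹ : ℝ) : EReal) * ENNReal.log (P {ω | c ≤ X n ω + Y n ω}))) atTop
        ≤ limsup (fun n => (((a n)⁻¹ : ℝ) : EReal)
            * ENNReal.log (P {ω | Y n ω < u ∧ c ≤ X n ω + Y n ω})) atTop
          + limsup (fun n =>
            -((((a n)⁻¹ : ℝ) : EReal) * ENNReal.log (P {ω | c ≤ X n ω + Y n ω}))) atTop := by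
          apply EReal.limsup_add_le
          · right; exact (hneg.trans_lt (EReal.coe_lt_top _)).ne
          · left; exact (hnum.trans_lt (EReal.coe_lt_top _)).ne
      _ ≤ (L : EReal) + ((lam * c ^ 2 / 2 : ℝ) : EReal) := add_le_add hnum hneg
      _ = ((-(G / 2) : ℝ) : EReal) := by
          rw [← EReal.coe_add, hL]
          norm_num
  -- conclude
  have hev : ∀ᶠ n in atTop, (((a n)⁻¹ : ℝ) : EReal)
      * ENNReal.log (P {ω | Y n ω < u ∧ c ≤ X n ω + Y n ω} / P {ω | c ≤ X n ω + Y n ω})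
      < ((-(G / 4) : ℝ) : EReal) :=
    eventually_lt_of_limsup_lt (hratio.trans_lt (EReal.coe_lt_coe_iff.2 (by linarith)))
  have hlogle : ∀ᶠ n in atTop,
      ENNReal.log (P {ω | Y n ω < u ∧ c ≤ X n ω + Y n ω} / P {ω | c ≤ X n ω + Y n ω})
      ≤ ((-(G / 4) * a n : ℝ) : EReal) := by
    filter_upwards [hev] with n hn
    calc ENNReal.log (P {ω | Y n ω < u ∧ c ≤ X n ω + Y n ω} / P {ω | c ≤ X n ω + Y n ω})
        = ((a n : ℝ) : EReal) * ((((a n)⁻¹ : ℝ) : EReal)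
          * ENNReal.log (P {ω | Y n ω < u ∧ c ≤ X n ω + Y n ω} / P {ω | c ≤ X n ω + Y n ω})) := by
          rw [← mul_assoc, ← EReal.coe_mul, mul_inv_cancel₀ (ha n).ne', EReal.coe_one, one_mul]
      _ ≤ ((a n : ℝ) : EReal) * ((-(G / 4) : ℝ) : EReal) :=
          mul_le_mul_of_nonneg_left hn.le (EReal.coe_nonneg.2 (ha n).le)
      _ = ((-(G / 4) * a n : ℝ) : EReal) := by rw [← EReal.coe_mul, mul_comm]
  have hbot : Tendsto (fun n =>
      ENNReal.log (P {ω | Y n ω < u ∧ c ≤ X n ω + Y n ω} / P {ω | c ≤ X n ω + Y n ω}))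
      atTop (nhds ⊥) := by
    rw [EReal.tendsto_nhds_bot_iff_real]
    intro M
    have hM : ∀ᶠ n in atTop, -(G / 4) * a n < M := by
      filter_upwards [ha'.eventually_gt_atTop (-M / (G / 4))] with n hn
      have hg4 : (0:ℝ) < G / 4 := by linarith
      rw [div_lt_iff₀ hg4] at hn
      linarith only [hn]
    filter_upwards [hlogle, hM] with n h1 h2
    exact lt_of_le_of_lt h1 (EReal.coe_lt_coe_iff.2 h2)
  have hfin := (ENNReal.continuous_exp.tendsto ⊥).comp hbot
  simpa [Function.comp_def, ENNReal.exp_log, EReal.exp_bot] using hfin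
end

section
/- Let (Ω, F, P) be a probability space, let (X_n) and (Y_n) be sequences of real-valued random variables on Ω such that X_n and Y_n are independent for each n, let (a_n) be positive reals with a_n → ∞, and let 0 < λ < β. Set σ² = λ⁻¹ − β⁻¹, I(x) = x²/(2σ²), J(x) = λx²/2, K(x) = βx²/2. Assume the laws of Y_n satisfy the LDP with speed (a_n) and rate function K, and the laws of X_n + Y_n satisfy the LDP with speed (a_n) and rate function J. Then the laws of X_n satisfy the LDP with speed (a_n) and rate function I. -/
open MeasureTheory ProbabilityTheory Filter Set

open scoped ENNReal

namespace LDPAux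

/-! EReal division/lt helpers -/

lemma div_lt_iff'' {a b c : EReal} (h : 0 < b) (h' : b ≠ ⊤) : a / b < c ↔ a < b * c := by
  nth_rw 1 [← @EReal.mul_div_cancel c b (ne_bot_of_gt h) h' (ne_of_gt h)]
  rw [EReal.mul_div b c b, mul_comm b c]
  exact (EReal.strictMono_div_right_of_pos h h').lt_iff_lt

lemma lt_div_iff'' {a b c : EReal} (h : 0 < b) (h' : b ≠ ⊤) : c < a / b ↔ b * c < a := by
  nth_rw 1 [← @EReal.mul_div_cancel c b (ne_bot_of_gt h) h' (ne_of_gt h)]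
  rw [EReal.mul_div b c b, mul_comm b c]
  exact (EReal.strictMono_div_right_of_pos h h').lt_iff_lt

lemma inv_smul_eq_div (r : ℝ) (x : EReal) : ((r⁻¹ : ℝ) : EReal) * x = x / (r : EReal) := by
  rw [EReal.coe_inv, EReal.div_eq_inv_mul]

/-- scaled log < iff -/
lemma slog_lt_iff {r : ℝ} (hr : 0 < r) (p : ℝ≥0∞) (y : ℝ) :
    ((r⁻¹ : ℝ) : EReal) * ENNReal.log p < (y : EReal) ↔ p < EReal.exp ((r * y : ℝ)) := by
  rw [inv_smul_eq_div, div_lt_iff'' (by exact_mod_cast hr) (by simp), ← EReal.coe_mul,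
    ← EReal.log_exp ((r * y : ℝ) : EReal), ENNReal.log_lt_log_iff, ENNReal.exp_log]

lemma lt_slog_iff {r : ℝ} (hr : 0 < r) (p : ℝ≥0∞) (y : ℝ) :
    (y : EReal) < ((r⁻¹ : ℝ) : EReal) * ENNReal.log p ↔ EReal.exp ((r * y : ℝ)) < p := by
  rw [inv_smul_eq_div, lt_div_iff'' (by exact_mod_cast hr) (by simp), ← EReal.coe_mul,
    ← EReal.log_exp ((r * y : ℝ) : EReal), ENNReal.log_lt_log_iff, ENNReal.exp_log]

lemma slog_le_iff {r : ℝ} (hr : 0 < r) (p : ℝ≥0∞) (y : ℝ) :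
    ((r⁻¹ : ℝ) : EReal) * ENNReal.log p ≤ (y : EReal) ↔ p ≤ EReal.exp ((r * y : ℝ)) := by
  rw [← not_lt, ← not_lt, not_iff_not, lt_slog_iff hr]

lemma le_slog_iff {r : ℝ} (hr : 0 < r) (p : ℝ≥0∞) (y : ℝ) :
    (y : EReal) ≤ ((r⁻¹ : ℝ) : EReal) * ENNReal.log p ↔ EReal.exp ((r * y : ℝ)) ≤ p := by
  rw [← not_lt, ← not_lt, not_iff_not, slog_lt_iff hr]

/-- EReal : L ≤ c from ∀ ε -/
lemma le_coe_of_forall_add {L : EReal} {c : ℝ} (h : ∀ ε : ℝ, 0 < ε → L ≤ ((c + ε : ℝ) : EReal)) :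
    L ≤ (c : EReal) := by
  by_contra hc
  push_neg at hc
  obtain ⟨w, hw1, hw2⟩ := exists_between hc
  lift w to ℝ using ⟨ne_top_of_lt hw2, ne_bot_of_gt hw1⟩ with r
  have hr : 0 < r - c := by
    have := EReal.coe_lt_coe_iff.mp hw1; linarith
  have := h (r - c) hr
  rw [show c + (r - c) = r by ring] at this
  exact absurd (this.trans_lt hw2) (lt_irrefl _)

lemma coe_le_of_forall_sub {L : EReal} {c : ℝ} (h : ∀ ε : ℝ, 0 < ε → ((c - ε : ℝ) : EReal) ≤ L) :
    (c : EReal) ≤ L := by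
  by_contra hc
  push_neg at hc
  obtain ⟨w, hw1, hw2⟩ := exists_between hc
  lift w to ℝ using ⟨ne_top_of_lt hw2, ne_bot_of_gt hw1⟩ with r
  have hr : 0 < c - r := by
    have := EReal.coe_lt_coe_iff.mp hw2; linarith
  have := h (c - r) hr
  rw [show c - (c - r) = r by ring] at this
  exact absurd (hw1.trans_le this) (lt_irrefl _)

def EUB (a : ℕ → ℝ) (p : ℕ → ℝ≥0∞) (c : ℝ) : Prop :=
  ∀ ε : ℝ, 0 < ε → ∀ᶠ n in atTop, p n ≤ EReal.exp ((a n * (c + ε) : ℝ))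

/-- Eventual lower bound at exponential scale. -/
def ELB (a : ℕ → ℝ) (p : ℕ → ℝ≥0∞) (c : ℝ) : Prop :=
  ∀ ε : ℝ, 0 < ε → ∀ᶠ n in atTop, EReal.exp ((a n * (c - ε) : ℝ)) ≤ p n

variable {a : ℕ → ℝ} {p q : ℕ → ℝ≥0∞} {c d : ℝ}

lemma eub_of_limsup_le (ha : ∀ n, 0 < a n)
    (h : limsup (fun n => (((a n)⁻¹ : ℝ) : EReal) * ENNReal.log (p n)) atTop ≤ ((-c : ℝ) : EReal)) :
    EUB a p (-c) := by
  intro ε hε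
  have h2 : limsup (fun n => (((a n)⁻¹ : ℝ) : EReal) * ENNReal.log (p n)) atTop
      < ((-c + ε : ℝ) : EReal) := by
    refine h.trans_lt ?_
    exact_mod_cast EReal.coe_lt_coe_iff.mpr (by linarith)
  filter_upwards [eventually_lt_of_limsup_lt h2] with n hn
  exact ((slog_lt_iff (ha n) _ _).mp hn).le

lemma limsup_le_of_eub (ha : ∀ n, 0 < a n) (h : EUB a p c) :
    limsup (fun n => (((a n)⁻¹ : ℝ) : EReal) * ENNReal.log (p n)) atTop ≤ (c : EReal) := by
  apply le_coe_of_forall_add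
  intro ε hε
  refine limsup_le_of_le (by isBoundedDefault) ?_
  filter_upwards [h ε hε] with n hn
  exact (slog_le_iff (ha n) _ _).mpr hn

lemma elb_of_le_liminf (ha : ∀ n, 0 < a n)
    (h : ((-c : ℝ) : EReal) ≤ liminf (fun n => (((a n)⁻¹ : ℝ) : EReal) * ENNReal.log (p n)) atTop) :
    ELB a p (-c) := by
  intro ε hε
  have h2 : ((-c - ε : ℝ) : EReal)
      < liminf (fun n => (((a n)⁻¹ : ℝ) : EReal) * ENNReal.log (p n)) atTop := by
    refine lt_of_lt_of_le ?_ h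
    exact_mod_cast EReal.coe_lt_coe_iff.mpr (by linarith)
  filter_upwards [eventually_lt_of_lt_liminf h2] with n hn
  exact ((lt_slog_iff (ha n) _ _).mp hn).le

lemma le_liminf_of_elb (ha : ∀ n, 0 < a n) (h : ELB a p c) :
    (c : EReal) ≤ liminf (fun n => (((a n)⁻¹ : ℝ) : EReal) * ENNReal.log (p n)) atTop := by
  apply coe_le_of_forall_sub
  intro ε hε
  refine le_liminf_of_le (by isBoundedDefault) ?_
  filter_upwards [h ε hε] with n hn
  exact (le_slog_iff (ha n) _ _).mpr hn

lemma exp_coe_mono : Monotone (fun x : ℝ => EReal.exp (x : EReal)) := fun x y h => by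
  simp only [EReal.exp_coe]
  exact ENNReal.ofReal_le_ofReal (Real.exp_le_exp.mpr h)

lemma exp_coe_add (u v : ℝ) :
    EReal.exp ((u + v : ℝ)) = EReal.exp (u : EReal) * EReal.exp (v : EReal) := by
  rw [show ((u + v : ℝ) : EReal) = (u : EReal) + (v : EReal) by exact_mod_cast rfl,
    EReal.exp_add]

lemma exp_coe_ne_top (u : ℝ) : EReal.exp (u : EReal) ≠ ⊤ := by simp
lemma exp_coe_ne_zero (u : ℝ) : EReal.exp (u : EReal) ≠ 0 := by
  simp [Real.exp_pos]

lemma EUB.mono_p (h : EUB a p c) (hq : ∀ᶠ n in atTop, q n ≤ p n) : EUB a q c := by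
  intro ε hε
  filter_upwards [h ε hε, hq] with n h1 h2 using h2.trans h1

lemma EUB.mono_c (ha : ∀ n, 0 < a n) (h : EUB a p c) (hcd : c ≤ d) : EUB a p d := by
  intro ε hε
  filter_upwards [h ε hε] with n h1
  refine h1.trans (exp_coe_mono ?_)
  have := (ha n).le
  nlinarith

lemma ELB.mono_p (h : ELB a p c) (hq : ∀ᶠ n in atTop, p n ≤ q n) : ELB a q c := by
  intro ε hε
  filter_upwards [h ε hε, hq] with n h1 h2 using h1.trans h2

lemma ELB.mono_c (ha : ∀ n, 0 < a n) (h : ELB a p c) (hdc : d ≤ c) : ELB a p d := by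
  intro ε hε
  filter_upwards [h ε hε] with n h1
  refine le_trans (exp_coe_mono ?_) h1
  have := (ha n).le
  nlinarith

lemma EUB.mul (h : EUB a p c) (h' : EUB a q d) : EUB a (fun n => p n * q n) (c + d) := by
  intro ε hε
  filter_upwards [h (ε / 2) (by linarith), h' (ε / 2) (by linarith)] with n h1 h2
  calc p n * q n ≤ EReal.exp ((a n * (c + ε / 2) : ℝ)) * EReal.exp ((a n * (d + ε / 2) : ℝ)) :=
        mul_le_mul' h1 h2
    _ = EReal.exp ((a n * (c + d + ε) : ℝ)) := by rw [← exp_coe_add]; ring_nf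

lemma count_le_exp (ha' : Tendsto a atTop atTop) {η : ℝ} (hη : 0 < η) (Nc : ℝ) :
    ∀ᶠ n in atTop, ENNReal.ofReal Nc ≤ EReal.exp ((a n * η : ℝ)) := by
  have h1 : Tendsto (fun n => a n * η) atTop atTop := ha'.atTop_mul_const hη
  filter_upwards [h1.eventually_ge_atTop (Real.log (max 1 Nc))] with n hn
  simp only [EReal.exp_coe]
  apply ENNReal.ofReal_le_ofReal
  calc Nc ≤ max 1 Nc := le_max_right _ _
    _ = Real.exp (Real.log (max 1 Nc)) := (Real.exp_log (by positivity)).symm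
    _ ≤ Real.exp (a n * η) := Real.exp_le_exp.mpr hn

lemma EUB.sum (ha' : Tendsto a atTop atTop) {N : ℕ} {ps : ℕ → ℕ → ℝ≥0∞}
    (h : ∀ i ∈ Finset.range N, EUB a (ps i) c) :
    EUB a (fun n => ∑ i ∈ Finset.range N, ps i n) c := by
  intro ε hε
  have hall : ∀ᶠ n in atTop, ∀ i ∈ Finset.range N, ps i n ≤ EReal.exp ((a n * (c + ε / 2) : ℝ)) := by
    rw [eventually_all_finset]
    intro i hi
    exact h i hi (ε / 2) (by linarith)
  filter_upwards [hall, count_le_exp ha' (show (0:ℝ) < ε / 2 by linarith) (N : ℝ)] with n h1 h2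
  calc ∑ i ∈ Finset.range N, ps i n
      ≤ ∑ _i ∈ Finset.range N, EReal.exp ((a n * (c + ε / 2) : ℝ)) := Finset.sum_le_sum h1
    _ = (N : ℝ≥0∞) * EReal.exp ((a n * (c + ε / 2) : ℝ)) := by
        rw [Finset.sum_const, Finset.card_range, nsmul_eq_mul]
    _ ≤ EReal.exp ((a n * (ε / 2) : ℝ)) * EReal.exp ((a n * (c + ε / 2) : ℝ)) := by
        apply mul_le_mul_left
        rw [← ENNReal.ofReal_natCast]
        exact h2
    _ = EReal.exp ((a n * (c + ε) : ℝ)) := by rw [← exp_coe_add]; ring_nf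

lemma EUB.add (ha' : Tendsto a atTop atTop) (h : EUB a p c) (h' : EUB a q c) :
    EUB a (fun n => p n + q n) c := by
  have := EUB.sum (c := c) ha' (N := 2) (ps := fun i => if i = 0 then p else q) ?_
  · refine this.mono_p ?_
    filter_upwards with n
    rw [Finset.sum_range_succ, Finset.sum_range_one]
    simp
  · intro i _hi
    by_cases h0 : i = 0 <;> simp [h0, h, h']

lemma EUB.zero (c : ℝ) : EUB a (fun _ => 0) c := by
  intro ε hε
  filter_upwards with n using zero_le

lemma EUB.of_le_one (ha : ∀ n, 0 < a n) (hp : ∀ n, p n ≤ 1) : EUB a p 0 := by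
  intro ε hε
  filter_upwards with n
  refine (hp n).trans ?_
  have : (1 : ℝ≥0∞) = EReal.exp ((0 : ℝ) : EReal) := by simp
  rw [this]
  apply exp_coe_mono
  have h1 := (ha n).le
  nlinarith

variable {a : ℕ → ℝ} {μ : ℕ → Measure ℝ} {R : ℝ → ℝ}

/-- Extract an EUB from an abstract LDP upper bound. -/
lemma eub_of_upper (ha : ∀ n, 0 < a n)
    (hupper : ∀ C : Set ℝ, IsClosed C →
      limsup (fun n => (((a n)⁻¹ : ℝ) : EReal) * ENNReal.log (μ n C)) atTop
        ≤ -(⨅ x ∈ C, (R x : EReal)))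
    {C : Set ℝ} (hC : IsClosed C) {c : ℝ} (hc : ∀ x ∈ C, c ≤ R x) :
    EUB a (fun n => μ n C) (-c) := by
  apply eub_of_limsup_le ha
  refine (hupper C hC).trans ?_
  rw [EReal.coe_neg, EReal.neg_le_neg_iff]
  exact le_iInf₂ fun x hx => EReal.coe_le_coe_iff.mpr (hc x hx)

/-- Extract an ELB from an abstract LDP lower bound. -/
lemma elb_of_lower (ha : ∀ n, 0 < a n)
    (hlower : ∀ O : Set ℝ, IsOpen O →
      -(⨅ x ∈ O, (R x : EReal))
        ≤ liminf (fun n => (((a n)⁻¹ : ℝ) : EReal) * ENNReal.log (μ n O)) atTop)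
    {O : Set ℝ} (hO : IsOpen O) {x : ℝ} (hx : x ∈ O) :
    ELB a (fun n => μ n O) (-(R x)) := by
  apply elb_of_le_liminf ha
  refine le_trans ?_ (hlower O hO)
  rw [EReal.coe_neg, EReal.neg_le_neg_iff]
  exact iInf₂_le x hx

/-- Produce the LDP upper bound conclusion from EUBs (nonempty closed case). -/
lemma upper_of_eub (ha : ∀ n, 0 < a n) {C : Set ℝ} {x₀ : ℝ} (hx₀ : x₀ ∈ C)
    (h : EUB a (fun n => μ n C) (-(R x₀))) :
    limsup (fun n => (((a n)⁻¹ : ℝ) : EReal) * ENNReal.log (μ n C)) atTop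
      ≤ -(⨅ x ∈ C, (R x : EReal)) := by
  refine (limsup_le_of_eub ha h).trans ?_
  rw [EReal.coe_neg, EReal.neg_le_neg_iff]
  exact iInf₂_le x₀ hx₀

/-- The empty-set case of the upper bound. -/
lemma upper_empty (ha : ∀ n, 0 < a n) (hμ : ∀ n, μ n ∅ = 0) :
    limsup (fun n => (((a n)⁻¹ : ℝ) : EReal) * ENNReal.log (μ n (∅ : Set ℝ))) atTop
      ≤ -(⨅ x ∈ (∅ : Set ℝ), (R x : EReal)) := by
  have : ∀ n, (((a n)⁻¹ : ℝ) : EReal) * ENNReal.log (μ n (∅ : Set ℝ)) = ⊥ := by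
    intro n
    rw [hμ n, ENNReal.log_zero]
    exact EReal.coe_mul_bot_of_pos (inv_pos.mpr (ha n))
  simp only [this]
  rw [limsup_const]
  exact bot_le

/-- Produce the LDP lower bound conclusion from pointwise ELBs. -/
lemma lower_of_elb (ha : ∀ n, 0 < a n) {O : Set ℝ}
    (h : ∀ x ∈ O, ((-(R x) : ℝ) : EReal)
      ≤ liminf (fun n => (((a n)⁻¹ : ℝ) : EReal) * ENNReal.log (μ n O)) atTop) :
    -(⨅ x ∈ O, (R x : EReal))
      ≤ liminf (fun n => (((a n)⁻¹ : ℝ) : EReal) * ENNReal.log (μ n O)) atTop := by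
  rw [EReal.neg_le]
  refine le_iInf₂ fun x hx => ?_
  rw [EReal.neg_le]
  rw [← EReal.coe_neg]
  exact h x hx


lemma EUB.of_forall_eps {a : ℕ → ℝ} {p : ℕ → ℝ≥0∞} {c : ℝ}
    (h : ∀ ε : ℝ, 0 < ε → EUB a p (c + ε)) : EUB a p c := by
  intro ε hε
  have := h (ε / 2) (by linarith) (ε / 2) (by linarith)
  filter_upwards [this] with n hn
  rwa [show c + ε / 2 + ε / 2 = c + ε by ring] at hn

section Prob

variable {Ω : Type*} [MeasurableSpace Ω] (P : Measure Ω) [IsProbabilityMeasure P]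

lemma law_prod_le {Xn Yn : Ω → ℝ} (hXn : Measurable Xn) (hYn : Measurable Yn)
    (hind : IndepFun Xn Yn P) {A B C' : Set ℝ} (hA : MeasurableSet A) (hB : MeasurableSet B)
    (hC' : MeasurableSet C') (hsum : ∀ x ∈ A, ∀ y ∈ B, x + y ∈ C') :
    P.map Xn A * P.map Yn B ≤ P.map (fun ω => Xn ω + Yn ω) C' := by
  rw [Measure.map_apply hXn hA, Measure.map_apply hYn hB, Measure.map_apply (f := fun ω => Xn ω + Yn ω) (hXn.add hYn) hC',
    ← hind.measure_inter_preimage_eq_mul A B hA hB]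
  apply measure_mono
  rintro ω ⟨h1, h2⟩
  exact hsum _ h1 _ h2

lemma bad_piece_le {Xn Yn : Ω → ℝ} (hXn : Measurable Xn) (hYn : Measurable Yn)
    (hind : IndepFun Xn Yn P) {S T S' V : Set ℝ} (hS : MeasurableSet S) (hT : MeasurableSet T)
    (hS' : S' ⊆ S) (h : ∀ x ∈ S', ∀ w ∈ V, w - x ∈ T) :
    P (Xn ⁻¹' S' ∩ (fun ω => Xn ω + Yn ω) ⁻¹' V) ≤ P.map Xn S * P.map Yn T := by
  rw [Measure.map_apply hXn hS, Measure.map_apply hYn hT,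
    ← hind.measure_inter_preimage_eq_mul S T hS hT]
  apply measure_mono
  rintro ω ⟨h1, h2⟩
  refine ⟨hS' h1, ?_⟩
  have := h _ h1 _ h2
  simpa using this

end Prob

section Main

variable {Ω : Type*} [MeasurableSpace Ω]

/-- The core product upper bound. -/
lemma prod_upper (P : Measure Ω) [IsProbabilityMeasure P]
    (X Y : ℕ → Ω → ℝ) (hX : ∀ n, Measurable (X n)) (hY : ∀ n, Measurable (Y n))
    (hindep : ∀ n, IndepFun (X n) (Y n) P)
    (a : ℕ → ℝ) (ha : ∀ n, 0 < a n) (J K : ℝ → ℝ)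
    (hXYupper : ∀ C : Set ℝ, IsClosed C →
      limsup (fun n => (((a n)⁻¹ : ℝ) : EReal)
          * ENNReal.log (P.map (fun ω => X n ω + Y n ω) C)) atTop
        ≤ -(⨅ x ∈ C, (J x : EReal)))
    (hYlower : ∀ O : Set ℝ, IsOpen O →
      -(⨅ x ∈ O, (K x : EReal))
        ≤ liminf (fun n => (((a n)⁻¹ : ℝ) : EReal) * ENNReal.log (P.map (Y n) O)) atTop)
    {A B C' : Set ℝ} (hA : MeasurableSet A) (hB : IsOpen B) (hC'c : IsClosed C')
    (hsum : ∀ x ∈ A, ∀ y ∈ B, x + y ∈ C') {c t : ℝ} (hc : ∀ z ∈ C', c ≤ J z) (htB : t ∈ B) :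
    EUB a (fun n => P.map (X n) A) (-c + K t) := by
  have h1 : EUB a (fun n => P.map (fun ω => X n ω + Y n ω) C') (-c) :=
    eub_of_upper ha hXYupper hC'c hc
  have h2 : ELB a (fun n => P.map (Y n) B) (-(K t)) := elb_of_lower ha hYlower hB htB
  intro ε hε
  filter_upwards [h1 (ε / 2) (by linarith), h2 (ε / 2) (by linarith)] with n e1 e2
  have key : P.map (X n) A * EReal.exp ((a n * (-(K t) - ε / 2) : ℝ))
      ≤ EReal.exp ((a n * (-c + ε / 2) : ℝ)) := by
    refine le_trans (mul_le_mul_right e2 _) ?_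
    exact le_trans (law_prod_le P (hX n) (hY n) (hindep n) hA hB.measurableSet
      hC'c.measurableSet hsum) e1
  have hre : (a n * (-c + ε / 2) : ℝ)
      = (a n * (-c + K t + ε) : ℝ) + (a n * (-(K t) - ε / 2) : ℝ) := by ring
  rw [hre, exp_coe_add] at key
  exact (ENNReal.mul_le_mul_iff_left (exp_coe_ne_zero _) (exp_coe_ne_top _)).mp key

end Main
variable {Ω : Type*} [MeasurableSpace Ω]

lemma ray_plus (P : Measure Ω) [IsProbabilityMeasure P]
    (X Y : ℕ → Ω → ℝ) (hX : ∀ n, Measurable (X n)) (hY : ∀ n, Measurable (Y n))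
    (hindep : ∀ n, IndepFun (X n) (Y n) P)
    (a : ℕ → ℝ) (ha : ∀ n, 0 < a n)
    (lam β : ℝ) (hlam : 0 < lam) (hlamβ : lam < β)
    (σ2 : ℝ) (hσ2 : σ2 = lam⁻¹ - β⁻¹)
    (I J K : ℝ → ℝ)
    (hI : I = fun x => x ^ 2 / (2 * σ2))
    (hJ : J = fun x => lam * x ^ 2 / 2)
    (hK : K = fun x => β * x ^ 2 / 2)
    (hXYupper : ∀ C : Set ℝ, IsClosed C →
      limsup (fun n => (((a n)⁻¹ : ℝ) : EReal)
          * ENNReal.log (P.map (fun ω => X n ω + Y n ω) C)) atTop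
        ≤ -(⨅ x ∈ C, (J x : EReal)))
    (hYlower : ∀ O : Set ℝ, IsOpen O →
      -(⨅ x ∈ O, (K x : EReal))
        ≤ liminf (fun n => (((a n)⁻¹ : ℝ) : EReal) * ENNReal.log (P.map (Y n) O)) atTop)
    (m : ℝ) (hm : 0 ≤ m) :
    EUB a (fun n => P.map (X n) (Ici m)) (-(I m)) := by
  have hβ : 0 < β := hlam.trans hlamβ
  have hβl : 0 < β - lam := by linarith
  rcases eq_or_lt_of_le hm with heq | hmpos
  · have hIm : I m = 0 := by rw [hI, ← heq]; norm_num
    rw [hIm, neg_zero]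
    exact EUB.of_le_one ha (fun n => prob_le_one)
  · set t := lam * m / (β - lam) with hts
    have htpos : 0 < t := div_pos (mul_pos hlam hmpos) hβl
    apply EUB.of_forall_eps
    intro ε hε
    set δ := min (t / 2) (ε / (lam * (m + t) + 1)) with hδdef
    have hA : 0 < lam * (m + t) + 1 := by nlinarith
    have hδpos : 0 < δ := lt_min (by linarith) (by positivity)
    have hδt : δ ≤ t / 2 := min_le_left _ _
    have hδε : δ ≤ ε / (lam * (m + t) + 1) := min_le_right _ _
    have hmtδ : 0 < m + t - δ := by linarith
    have step := prod_upper P X Y hX hY hindep a ha J K hXYupper hYlower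
      (measurableSet_Ici : MeasurableSet (Ici m))
      (isOpen_Ioo : IsOpen (Ioo (t - δ) (t + δ)))
      (isClosed_Ici : IsClosed (Ici (m + t - δ)))
      (fun x hx y hy => by
        simp only [mem_Ici, mem_Ioo] at *
        linarith [hy.1])
      (c := J (m + t - δ)) (t := t)
      (fun z hz => by
        simp only [mem_Ici] at hz
        rw [hJ]
        simp only
        nlinarith [mul_nonneg (sub_nonneg.2 hz) (show (0:ℝ) ≤ z + (m + t - δ) by linarith)])
      (by simp only [mem_Ioo]; constructor <;> linarith)
    refine step.mono_c ha ?_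
    rw [hI, hJ, hK]
    simp only
    have hid : m ^ 2 / (2 * σ2) = lam * (m + t) ^ 2 / 2 - β * t ^ 2 / 2 := by
      rw [hσ2, hts]
      field_simp
      ring
    have hδub : δ * (lam * (m + t) + 1) ≤ ε := by
      rw [← le_div_iff₀ hA]
      exact hδε
    nlinarith [hδpos, hmpos, htpos]
lemma ray_minus (P : Measure Ω) [IsProbabilityMeasure P]
    (X Y : ℕ → Ω → ℝ) (hX : ∀ n, Measurable (X n)) (hY : ∀ n, Measurable (Y n))
    (hindep : ∀ n, IndepFun (X n) (Y n) P)
    (a : ℕ → ℝ) (ha : ∀ n, 0 < a n)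
    (lam β : ℝ) (hlam : 0 < lam) (hlamβ : lam < β)
    (σ2 : ℝ) (hσ2 : σ2 = lam⁻¹ - β⁻¹)
    (I J K : ℝ → ℝ)
    (hI : I = fun x => x ^ 2 / (2 * σ2))
    (hJ : J = fun x => lam * x ^ 2 / 2)
    (hK : K = fun x => β * x ^ 2 / 2)
    (hXYupper : ∀ C : Set ℝ, IsClosed C →
      limsup (fun n => (((a n)⁻¹ : ℝ) : EReal)
          * ENNReal.log (P.map (fun ω => X n ω + Y n ω) C)) atTop
        ≤ -(⨅ x ∈ C, (J x : EReal)))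
    (hYlower : ∀ O : Set ℝ, IsOpen O →
      -(⨅ x ∈ O, (K x : EReal))
        ≤ liminf (fun n => (((a n)⁻¹ : ℝ) : EReal) * ENNReal.log (P.map (Y n) O)) atTop)
    (m : ℝ) (hm : 0 ≤ m) :
    EUB a (fun n => P.map (X n) (Iic (-m))) (-(I m)) := by
  have hβ : 0 < β := hlam.trans hlamβ
  have hβl : 0 < β - lam := by linarith
  rcases eq_or_lt_of_le hm with heq | hmpos
  · have hIm : I m = 0 := by rw [hI, ← heq]; norm_num
    rw [hIm, neg_zero]
    exact EUB.of_le_one ha (fun n => prob_le_one)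
  · set t := lam * m / (β - lam) with hts
    have htpos : 0 < t := div_pos (mul_pos hlam hmpos) hβl
    apply EUB.of_forall_eps
    intro ε hε
    set δ := min (t / 2) (ε / (lam * (m + t) + 1)) with hδdef
    have hA : 0 < lam * (m + t) + 1 := by nlinarith
    have hδpos : 0 < δ := lt_min (by linarith) (by positivity)
    have hδt : δ ≤ t / 2 := min_le_left _ _
    have hδε : δ ≤ ε / (lam * (m + t) + 1) := min_le_right _ _
    have hmtδ : 0 < m + t - δ := by linarith
    have step := prod_upper P X Y hX hY hindep a ha J K hXYupper hYlower
      (measurableSet_Iic : MeasurableSet (Iic (-m)))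
      (isOpen_Ioo : IsOpen (Ioo (-t - δ) (-t + δ)))
      (isClosed_Iic : IsClosed (Iic (-(m + t - δ))))
      (fun x hx y hy => by
        simp only [mem_Iic, mem_Ioo] at *
        linarith [hy.2])
      (c := J (m + t - δ)) (t := -t)
      (fun z hz => by
        simp only [mem_Iic] at hz
        rw [hJ]
        simp only
        nlinarith [mul_nonneg (show (0:ℝ) ≤ -z - (m + t - δ) by linarith)
          (show (0:ℝ) ≤ -z + (m + t - δ) by linarith)])
      (by simp only [mem_Ioo]; constructor <;> linarith)
    refine step.mono_c ha ?_
    rw [hI, hJ, hK]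
    simp only [neg_sq]
    have hid : m ^ 2 / (2 * σ2) = lam * (m + t) ^ 2 / 2 - β * t ^ 2 / 2 := by
      rw [hσ2, hts]
      field_simp
      ring
    have hδub : δ * (lam * (m + t) + 1) ≤ ε := by
      rw [← le_div_iff₀ hA]
      exact hδε
    nlinarith [hδpos, hmpos, htpos]
lemma upper_closed (P : Measure Ω) [IsProbabilityMeasure P]
    (X Y : ℕ → Ω → ℝ) (hX : ∀ n, Measurable (X n)) (hY : ∀ n, Measurable (Y n))
    (hindep : ∀ n, IndepFun (X n) (Y n) P)
    (a : ℕ → ℝ) (ha : ∀ n, 0 < a n) (ha' : Tendsto a atTop atTop)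
    (lam β : ℝ) (hlam : 0 < lam) (hlamβ : lam < β)
    (σ2 : ℝ) (hσ2 : σ2 = lam⁻¹ - β⁻¹)
    (I J K : ℝ → ℝ)
    (hI : I = fun x => x ^ 2 / (2 * σ2))
    (hJ : J = fun x => lam * x ^ 2 / 2)
    (hK : K = fun x => β * x ^ 2 / 2)
    (hXYupper : ∀ C : Set ℝ, IsClosed C →
      limsup (fun n => (((a n)⁻¹ : ℝ) : EReal)
          * ENNReal.log (P.map (fun ω => X n ω + Y n ω) C)) atTop
        ≤ -(⨅ x ∈ C, (J x : EReal)))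
    (hYlower : ∀ O : Set ℝ, IsOpen O →
      -(⨅ x ∈ O, (K x : EReal))
        ≤ liminf (fun n => (((a n)⁻¹ : ℝ) : EReal) * ENNReal.log (P.map (Y n) O)) atTop) :
    ∀ C : Set ℝ, IsClosed C →
      limsup (fun n => (((a n)⁻¹ : ℝ) : EReal) * ENNReal.log (P.map (X n) C)) atTop
        ≤ -(⨅ x ∈ C, (I x : EReal)) := by
  intro C hC
  rcases C.eq_empty_or_nonempty with rfl | hne
  · exact upper_empty ha (fun n => measure_empty)
  · obtain ⟨x₀, hx₀C, hmin⟩ : ∃ x₀ ∈ C, ∀ x ∈ C, |x₀| ≤ |x| := by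
      obtain ⟨x₀, hx₀, hd⟩ := hC.exists_infDist_eq_dist hne 0
      refine ⟨x₀, hx₀, fun x hx => ?_⟩
      have h1 := Metric.infDist_le_dist_of_mem (x := (0 : ℝ)) hx
      rw [hd] at h1
      simpa [Real.dist_eq, abs_sub_comm] using h1
    set m := |x₀| with hmdef
    refine upper_of_eub ha hx₀C ?_
    have hIm : I x₀ = I m := by rw [hI]; simp [hmdef, sq_abs]
    have h1 := ray_plus P X Y hX hY hindep a ha lam β hlam hlamβ σ2 hσ2 I J K hI hJ hK
      hXYupper hYlower m (abs_nonneg x₀)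
    have h2 := ray_minus P X Y hX hY hindep a ha lam β hlam hlamβ σ2 hσ2 I J K hI hJ hK
      hXYupper hYlower m (abs_nonneg x₀)
    have hadd := h1.add ha' h2
    rw [hIm]
    refine hadd.mono_p ?_
    filter_upwards with n
    calc P.map (X n) C ≤ P.map (X n) (Ici m ∪ Iic (-m)) := by
          apply measure_mono
          intro x hx
          rcases abs_cases x with ⟨he, _⟩ | ⟨he, _⟩
          · left; rw [mem_Ici]; rw [← he]; exact hmin x hx
          · right; rw [mem_Iic]; have := hmin x hx; rw [he] at this; linarith
      _ ≤ P.map (X n) (Ici m) + P.map (X n) (Iic (-m)) := measure_union_le _ _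

set_option maxHeartbeats 2000000 in
lemma elb_ball (P : Measure Ω) [IsProbabilityMeasure P]
    (X Y : ℕ → Ω → ℝ) (hX : ∀ n, Measurable (X n)) (hY : ∀ n, Measurable (Y n))
    (hindep : ∀ n, IndepFun (X n) (Y n) P)
    (a : ℕ → ℝ) (ha : ∀ n, 0 < a n) (ha' : Tendsto a atTop atTop)
    (lam β : ℝ) (hlam : 0 < lam) (hlamβ : lam < β)
    (σ2 : ℝ) (hσ2 : σ2 = lam⁻¹ - β⁻¹)
    (I J K : ℝ → ℝ)
    (hI : I = fun x => x ^ 2 / (2 * σ2))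
    (hJ : J = fun x => lam * x ^ 2 / 2)
    (hK : K = fun x => β * x ^ 2 / 2)
    (hXupper : ∀ C : Set ℝ, IsClosed C →
      limsup (fun n => (((a n)⁻¹ : ℝ) : EReal) * ENNReal.log (P.map (X n) C)) atTop
        ≤ -(⨅ x ∈ C, (I x : EReal)))
    (hYupper : ∀ C : Set ℝ, IsClosed C →
      limsup (fun n => (((a n)⁻¹ : ℝ) : EReal) * ENNReal.log (P.map (Y n) C)) atTop
        ≤ -(⨅ x ∈ C, (K x : EReal)))
    (hXYlower : ∀ O : Set ℝ, IsOpen O →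
      -(⨅ x ∈ O, (J x : EReal))
        ≤ liminf (fun n => (((a n)⁻¹ : ℝ) : EReal)
            * ENNReal.log (P.map (fun ω => X n ω + Y n ω) O)) atTop)
    (hYlower : ∀ O : Set ℝ, IsOpen O →
      -(⨅ x ∈ O, (K x : EReal))
        ≤ liminf (fun n => (((a n)⁻¹ : ℝ) : EReal) * ENNReal.log (P.map (Y n) O)) atTop)
    (hXYupper : ∀ C : Set ℝ, IsClosed C →
      limsup (fun n => (((a n)⁻¹ : ℝ) : EReal)
          * ENNReal.log (P.map (fun ω => X n ω + Y n ω) C)) atTop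
        ≤ -(⨅ x ∈ C, (J x : EReal)))
    (x₀ δ : ℝ) (hδ : 0 < δ) :
    ELB a (fun n => P.map (X n) (Metric.ball x₀ δ)) (-(I x₀)) := by
  have hβ : 0 < β := hlam.trans hlamβ
  have hβl : 0 < β - lam := by linarith
  have hσ2pos : 0 < σ2 := by
    rw [hσ2]
    have h1 : β⁻¹ < lam⁻¹ := by rw [inv_lt_inv₀ hβ hlam]; exact hlamβ
    linarith
  have hσ2inv : 0 < σ2⁻¹ := inv_pos.mpr hσ2pos
  set t := lam * x₀ / (β - lam) with hts
  set z := x₀ + t with hzs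
  set c₀ := (σ2⁻¹ + β) / 2 with hc₀s
  have hc₀ : 0 < c₀ := by rw [hc₀s]; linarith
  set ρ := (β - lam) / β with hρs
  have hρ0 : 0 ≤ ρ := div_nonneg hβl.le hβ.le
  have hρ1 : ρ ≤ 1 := by rw [hρs, div_le_one hβ]; linarith
  have hkey : ∀ x w : ℝ, I x + K (w - x) = J w + c₀ * (x - ρ * w) ^ 2 := by
    intro x w
    rw [hI, hJ, hK, hc₀s, hρs, hσ2]
    simp only
    have h1 : lam⁻¹ - β⁻¹ = (β - lam) / (lam * β) := by field_simp [hβ.ne', hlam.ne']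
    rw [h1, inv_div]
    field_simp [hβ.ne', hlam.ne', hβl.ne']
    ring
  have hρz : ρ * z = x₀ := by
    rw [hρs, hzs, hts]
    field_simp
    ring
  have hJz : J z = I x₀ + K t := by
    rw [hI, hJ, hK]
    simp only
    rw [hzs, hts, hσ2]
    field_simp [hβ.ne', hlam.ne', hβl.ne']
    ring
  have hJzpos : 0 ≤ J z := by rw [hJ]; positivity
  intro ε hε
  -- parameters
  set δ' := min δ (min 1 (min (ε / (8*β*(|t|+1)+1)) (ε / (c₀+1)))) with hδ's
  have hd1 : 0 < 8*β*(|t|+1)+1 := by positivity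
  have hδ'pos : 0 < δ' :=
    lt_min hδ (lt_min one_pos (lt_min (div_pos hε hd1) (div_pos hε (by linarith))))
  have hδ'δ : δ' ≤ δ := min_le_left _ _
  have hδ'1 : δ' ≤ 1 := (min_le_right _ _).trans (min_le_left _ _)
  have hδ'ε1 : δ' ≤ ε / (8*β*(|t|+1)+1) :=
    (min_le_right _ _).trans ((min_le_right _ _).trans (min_le_left _ _))
  have hδ'ε2 : δ' ≤ ε / (c₀+1) :=
    (min_le_right _ _).trans ((min_le_right _ _).trans (min_le_right _ _))
  set G := c₀ * δ' ^ 2 / 8 with hGs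
  have hG : 0 < G := by
    have := mul_pos hc₀ (pow_pos hδ'pos 2)
    rw [hGs]; linarith
  have hGε : G ≤ ε / 4 := by
    have h1 : δ' * (c₀+1) ≤ ε := by rw [← le_div_iff₀ (by linarith)]; exact hδ'ε2
    have h2 : δ' ^ 2 ≤ δ' := by
      rw [pow_two]
      calc δ' * δ' ≤ δ' * 1 := mul_le_mul_of_nonneg_left hδ'1 hδ'pos.le
        _ = δ' := mul_one _
    have h3 : c₀ * δ' ^ 2 ≤ c₀ * δ' := mul_le_mul_of_nonneg_left h2 hc₀.le
    rw [hGs]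
    linarith only [h1, h3, hδ'pos, hε]
  set κ := min (δ'/8) (c₀ * δ'^2 / (16*lam*(|z|+1)+1)) with hκs
  have hd2 : 0 < 16*lam*(|z|+1)+1 := by positivity
  have hκpos : 0 < κ :=
    lt_min (by linarith) (div_pos (mul_pos hc₀ (pow_pos hδ'pos 2)) hd2)
  have hκδ : κ ≤ δ'/8 := min_le_left _ _
  have hκc : κ ≤ c₀ * δ'^2 / (16*lam*(|z|+1)+1) := min_le_right _ _
  have hκ1 : κ ≤ 1 := by linarith
  set M := max (|x₀| + 1) (Real.sqrt (2*σ2*(J z + G)) + 1) with hMs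
  have hMpos : 0 < M := lt_of_lt_of_le (by positivity) (le_max_left _ _)
  have hMI : J z + G ≤ I M := by
    rw [hI]
    simp only
    have h0 : 0 ≤ 2*σ2*(J z + G) :=
      mul_nonneg (by linarith only [hσ2pos]) (by linarith only [hJzpos, hG])
    have h1 : Real.sqrt (2*σ2*(J z + G)) + 1 ≤ M := le_max_right _ _
    have h2 := Real.sq_sqrt h0
    have h3 := Real.sqrt_nonneg (2*σ2*(J z + G))
    rw [le_div_iff₀ (by linarith only [hσ2pos])]
    have h4 : (Real.sqrt (2*σ2*(J z + G)) + 1)^2 ≤ M^2 :=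
      pow_le_pow_left₀ (by linarith only [h3]) h1 2
    linarith only [h4, h2, h3]
  set N := (⌊2*M/κ⌋).toNat + 1 with hNs
  set Bδ' := Metric.ball x₀ δ' with hBs
  -- main event lower bound
  have hmain : ELB a (fun n => P.map (fun ω => X n ω + Y n ω) (Metric.ball z κ)) (-(J z)) :=
    elb_of_lower ha hXYlower Metric.isOpen_ball (Metric.mem_ball_self hκpos)
  -- Y near t upper bound
  set err := β*(κ+δ')*(2*|t|+(κ+δ'))/2 with herrs
  have hνbar : EUB a (fun n => P.map (Y n) (Metric.closedBall t (κ + δ'))) (-(K t - err)) := by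
    refine eub_of_upper ha hYupper Metric.isClosed_closedBall ?_
    intro y hy
    have h1 : |y - t| ≤ κ + δ' := by
      rw [Metric.mem_closedBall, Real.dist_eq] at hy
      exact hy
    rw [hK, herrs]
    simp only
    have h2 : (t - y) * (t + y) ≤ |t - y| * |t + y| := by rw [← abs_mul]; exact le_abs_self _
    have h3 : |t + y| ≤ 2*|t| + |t - y| := by
      have : t + y = 2*t - (t-y) := by ring
      rw [this]
      refine (abs_sub _ _).trans ?_
      rw [abs_mul]
      simp [abs_of_nonneg]
    have h1' : |t - y| ≤ κ + δ' := by rw [abs_sub_comm]; exact h1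
    have h4 : |t - y| * |t + y| ≤ (κ+δ')*(2*|t|+(κ+δ')) := by
      refine mul_le_mul h1' (h3.trans ?_) (abs_nonneg _) (by positivity)
      linarith only [h1']
    have h5 : t^2 - y^2 ≤ (κ+δ')*(2*|t|+(κ+δ')) := by linarith only [h2, h4]
    have h6 := mul_le_mul_of_nonneg_left h5 hβ.le
    linarith only [h6]
  have herr2 : err ≤ ε / 4 := by
    have h1 : δ' * (8*β*(|t|+1)+1) ≤ ε := by rw [← le_div_iff₀ hd1]; exact hδ'ε1
    rw [herrs]
    have hs2 : κ + δ' ≤ 2*δ' := by linarith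
    have hb1 : 2*|t| + (κ+δ') ≤ 2*(|t|+1) := by linarith
    have hb2 : β*(κ+δ')*(2*|t|+(κ+δ')) ≤ β*(2*δ')*(2*(|t|+1)) := by
      apply mul_le_mul
      · apply mul_le_mul_of_nonneg_left hs2 hβ.le
      · exact hb1
      · positivity
      · positivity
    linarith only [hb2, h1, hδ'pos]
  clear_value t z c₀ ρ δ' G κ M N err
  -- splitting the main event
  have hsplit : ∀ n, P.map (fun ω => X n ω + Y n ω) (Metric.ball z κ)
      ≤ P.map (X n) Bδ' * P.map (Y n) (Metric.closedBall t (κ+δ'))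
        + P ((X n)⁻¹' Bδ'ᶜ ∩ (fun ω => X n ω + Y n ω)⁻¹' (Metric.ball z κ)) := by
    intro n
    have hBm : MeasurableSet Bδ' := Metric.isOpen_ball.measurableSet
    have hcm : MeasurableSet (Metric.closedBall t (κ+δ')) := Metric.isClosed_closedBall.measurableSet
    have heq : P ((X n)⁻¹' Bδ' ∩ (Y n)⁻¹' (Metric.closedBall t (κ+δ')))
        = P.map (X n) Bδ' * P.map (Y n) (Metric.closedBall t (κ+δ')) := by
      rw [(hindep n).measure_inter_preimage_eq_mul _ _ hBm hcm,
        Measure.map_apply (hX n) hBm, Measure.map_apply (hY n) hcm]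
    rw [← heq, Measure.map_apply (f := fun ω => X n ω + Y n ω) ((hX n).add (hY n)) Metric.isOpen_ball.measurableSet]
    refine le_trans (measure_mono ?_) (measure_union_le _ _)
    intro ω hω
    by_cases hx : X n ω ∈ Bδ'
    · left
      refine ⟨hx, ?_⟩
      have h1 : |X n ω + Y n ω - z| < κ := by
        have h := hω
        rw [Set.mem_preimage, Metric.mem_ball, Real.dist_eq] at h
        exact h
      have h2 : |X n ω - x₀| < δ' := by
        rw [hBs, Metric.mem_ball, Real.dist_eq] at hx
        exact hx
      rw [Set.mem_preimage, Metric.mem_closedBall, Real.dist_eq]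
      have h3 : Y n ω - t = (X n ω + Y n ω - z) - (X n ω - x₀) := by rw [hzs]; ring
      rw [h3]
      refine (abs_sub _ _).trans ?_
      linarith only [h1, h2]
    · right; exact ⟨hx, hω⟩
  -- tail bound
  have htail : EUB a (fun n => P ((X n)⁻¹' (Ici M ∪ Iic (-M)))) (-(J z + G)) := by
    have h1 := ray_plus P X Y hX hY hindep a ha lam β hlam hlamβ σ2 hσ2 I J K hI hJ hK
      hXYupper hYlower M hMpos.le
    have h2 := ray_minus P X Y hX hY hindep a ha lam β hlam hlamβ σ2 hσ2 I J K hI hJ hK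
      hXYupper hYlower M hMpos.le
    refine ((h1.add ha' h2).mono_p ?_).mono_c ha (by linarith only [hMI])
    filter_upwards with n
    rw [← Measure.map_apply (hX n) (measurableSet_Ici.union measurableSet_Iic)]
    exact measure_union_le _ _
  -- grid pieces
  have hpiece : ∀ i ∈ Finset.range N,
      EUB a (fun n => P ((X n)⁻¹' (Icc (-M + (i:ℝ)*κ) (-M + (i:ℝ)*κ + κ) ∩ Bδ'ᶜ)
        ∩ (fun ω => X n ω + Y n ω)⁻¹' (Metric.ball z κ))) (-(J z + G)) := by
    intro i _
    set u := -M + (i:ℝ)*κ with hus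
    by_cases hcase : Icc u (u + κ) ⊆ Bδ'
    · refine (EUB.zero _).mono_p ?_
      filter_upwards with n
      have hempty : Icc u (u + κ) ∩ Bδ'ᶜ = ∅ := by
        ext x
        simp only [mem_inter_iff, mem_compl_iff, mem_empty_iff_false, iff_false, not_and,
          not_not]
        exact fun hx => hcase hx
      rw [hempty]
      simp
    · obtain ⟨xb, hxbS, hxbB⟩ := not_subset.mp hcase
      have hSne : (Icc u (u + κ)).Nonempty := ⟨xb, hxbS⟩
      have hTne : (Icc (z - κ - (u + κ)) (z + κ - u)).Nonempty :=
        nonempty_Icc.mpr (by linarith only [hκpos])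
      obtain ⟨xS, hxSmem, hxSmin⟩ := isCompact_Icc.exists_isMinOn (f := I) hSne
        (by rw [hI]; exact ((continuous_pow 2).div_const (2*σ2)).continuousOn)
      obtain ⟨yT, hyTmem, hyTmin⟩ := isCompact_Icc.exists_isMinOn (f := K) hTne
        (by rw [hK]; exact ((continuous_const.mul (continuous_pow 2)).div_const 2).continuousOn)
      rw [mem_Icc] at hxSmem hyTmem
      have e1 : EUB a (fun n => P.map (X n) (Icc u (u + κ))) (-(I xS)) :=
        eub_of_upper ha hXupper isClosed_Icc (fun x hx => isMinOn_iff.mp hxSmin x hx)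
      have e2 : EUB a (fun n => P.map (Y n) (Icc (z - κ - (u + κ)) (z + κ - u))) (-(K yT)) :=
        eub_of_upper ha hYupper isClosed_Icc (fun y hy => isMinOn_iff.mp hyTmin y hy)
      refine ((e1.mul e2).mono_p ?_).mono_c ha ?_
      · filter_upwards with n
        refine bad_piece_le P (hX n) (hY n) (hindep n) measurableSet_Icc measurableSet_Icc
          inter_subset_left ?_
        rintro x ⟨hx1, _⟩ w hw
        rw [mem_Icc] at hx1 ⊢
        rw [Metric.mem_ball, Real.dist_eq] at hw
        have hww := abs_lt.mp hw
        constructor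
        · linarith only [hww.1, hx1.2]
        · linarith only [hww.2, hx1.1]
      · -- the quadratic gap estimate
        set w := xS + yT with hws
        have hw1 : z - 2*κ ≤ w := by rw [hws]; linarith only [hyTmem.1, hxSmem.1]
        have hw2 : w ≤ z + 2*κ := by rw [hws]; linarith only [hyTmem.2, hxSmem.2]
        have hwxS : w - xS = yT := by rw [hws]; ring
        clear_value w
        have hfar : δ' - κ ≤ |xS - x₀| := by
          have h1 : δ' ≤ |xb - x₀| := by
            rw [hBs, Metric.mem_ball, Real.dist_eq, not_lt] at hxbB
            exact hxbB
          rw [mem_Icc] at hxbS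
          have h2 : |xb - xS| ≤ κ := abs_le.mpr ⟨by linarith only [hxbS.1, hxSmem.2], by linarith only [hxbS.2, hxSmem.1]⟩
          have h3 : |xb - x₀| ≤ |xb - xS| + |xS - x₀| := abs_sub_le _ _ _
          linarith only [h1, h2, h3]
        have hρw : |ρ*w - x₀| ≤ 2*κ := by
          rw [← hρz, show ρ*w - ρ*z = ρ*(w-z) by ring, abs_mul, abs_of_nonneg hρ0]
          have h1 : |w - z| ≤ 2*κ := abs_le.mpr ⟨by linarith only [hw1], by linarith only [hw2]⟩
          calc ρ * |w - z| ≤ 1 * |w - z| := mul_le_mul_of_nonneg_right hρ1 (abs_nonneg _)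
            _ = |w - z| := one_mul _
            _ ≤ 2*κ := h1
        have hxρw : δ' - 3*κ ≤ |xS - ρ*w| := by
          have h3 : |xS - x₀| ≤ |xS - ρ*w| + |ρ*w - x₀| := abs_sub_le _ _ _
          linarith only [h3, hρw, hfar]
        have h58 : 0 ≤ δ' - 3*κ := by linarith only [hκδ, hδ'pos, hκpos]
        have hsq : (δ' - 3*κ)^2 ≤ (xS - ρ*w)^2 := by
          calc (δ' - 3*κ)^2 ≤ |xS - ρ*w|^2 := by
                exact pow_le_pow_left₀ h58 hxρw 2
            _ = (xS - ρ*w)^2 := sq_abs _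
        have hJw : J z - 2*lam*κ*(|z|+1) ≤ J w := by
          rw [hJ]
          simp only
          have h1 : |z - w| ≤ 2*κ := abs_le.mpr ⟨by linarith only [hw2], by linarith only [hw1]⟩
          have h2 : (z - w) * (z + w) ≤ |z - w| * |z + w| := by
            rw [← abs_mul]; exact le_abs_self _
          have h3 : |z + w| ≤ 2*|z| + |z - w| := by
            rw [show z + w = 2*z - (z - w) by ring]
            refine (abs_sub _ _).trans ?_
            rw [abs_mul]
            simp [abs_of_nonneg]
          have h4 : |z - w| * |z + w| ≤ (2*κ)*(2*|z| + 2*κ) :=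
            mul_le_mul h1 (by linarith only [h1, h3]) (abs_nonneg _) (by positivity)
          have h5 : z^2 - w^2 ≤ 4*κ*|z| + 4*κ^2 := by linarith only [h2, h4]
          have h6 : κ^2 ≤ κ := by
            rw [pow_two]
            calc κ * κ ≤ κ * 1 := mul_le_mul_of_nonneg_left hκ1 hκpos.le
              _ = κ := mul_one _
          have h7 : lam*(z^2 - w^2) ≤ lam*(4*κ*|z| + 4*κ) :=
            mul_le_mul_of_nonneg_left (by linarith only [h5, h6]) hlam.le
          linarith only [h7]
        have hκgap : 2*lam*κ*(|z|+1) ≤ c₀*δ'^2/8 := by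
          have h1 : κ * (16*lam*(|z|+1)+1) ≤ c₀*δ'^2 := by
            rw [← le_div_iff₀ hd2]; exact hκc
          linarith only [h1, hκpos]
        have hq := hkey xS w
        rw [hwxS] at hq
        have h5 : c₀*(δ' - 3*κ)^2 ≤ c₀*(xS - ρ*w)^2 := mul_le_mul_of_nonneg_left hsq hc₀.le
        have h6 : c₀*δ'^2/4 ≤ c₀*(δ' - 3*κ)^2 := by
          have h58' : 5*δ'/8 ≤ δ' - 3*κ := by linarith only [hκδ]
          have h7 : (5*δ'/8)^2 ≤ (δ' - 3*κ)^2 := by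
            exact pow_le_pow_left₀ (by positivity) h58' 2
          have h8 := mul_le_mul_of_nonneg_left h7 hc₀.le
          have h9 : 0 ≤ c₀ * δ'^2 := mul_nonneg hc₀.le (sq_nonneg δ')
          linarith only [h8, h9]
        have hfinal : J z + G ≤ I xS + K yT := by
          rw [hq, hGs]
          linarith only [hJw, hκgap, h5, h6]
        linarith only [hfinal]
  -- covering the bad event
  have hcover : ∀ n, P ((X n)⁻¹' Bδ'ᶜ ∩ (fun ω => X n ω + Y n ω)⁻¹' (Metric.ball z κ))
      ≤ P ((X n)⁻¹' (Ici M ∪ Iic (-M)))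
        + ∑ i ∈ Finset.range N, P ((X n)⁻¹' (Icc (-M + (i:ℝ)*κ) (-M + (i:ℝ)*κ + κ) ∩ Bδ'ᶜ)
            ∩ (fun ω => X n ω + Y n ω)⁻¹' (Metric.ball z κ)) := by
    intro n
    refine le_trans (measure_mono ?_) ((measure_union_le _ _).trans
      (add_le_add_right (measure_biUnion_finset_le _ _) _))
    rintro ω ⟨h1, h2⟩
    by_cases hM : M ≤ |X n ω|
    · left
      rw [Set.mem_preimage]
      rcases le_abs.mp hM with h | h
      · exact Or.inl h
      · exact Or.inr (by rw [mem_Iic]; linarith only [h])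
    · right
      push_neg at hM
      have hxl := abs_lt.mp hM
      set x := X n ω with hxs
      have hnn : 0 ≤ (x+M)/κ := div_nonneg (by linarith only [hxl.1]) hκpos.le
      have hge0 : 0 ≤ ⌊(x+M)/κ⌋ := Int.floor_nonneg.mpr hnn
      have hcast : ((⌊(x+M)/κ⌋.toNat : ℕ) : ℝ) = ((⌊(x+M)/κ⌋ : ℤ) : ℝ) := by
        exact_mod_cast congrArg (fun j : ℤ => (j : ℝ)) (Int.toNat_of_nonneg hge0)
      have hdm : (x+M)/κ * κ = x + M := div_mul_cancel₀ _ hκpos.ne'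
      have hfl : ((⌊(x+M)/κ⌋ : ℤ) : ℝ) ≤ (x+M)/κ := Int.floor_le _
      have hfl2 : (x+M)/κ < ((⌊(x+M)/κ⌋ : ℤ) : ℝ) + 1 := Int.lt_floor_add_one _
      refine Set.mem_biUnion (?_ : ⌊(x+M)/κ⌋.toNat ∈ Finset.range N) ⟨⟨?_, h1⟩, h2⟩
      · rw [Finset.mem_range, hNs]
        have hle : (x+M)/κ ≤ 2*M/κ := by
          gcongr
          linarith only [hxl.2]
        have hff : ⌊(x+M)/κ⌋ ≤ ⌊2*M/κ⌋ := Int.floor_le_floor hle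
        have := Int.toNat_le_toNat hff
        omega
      · rw [mem_Icc]
        constructor
        · rw [hcast]
          have := mul_le_mul_of_nonneg_right hfl hκpos.le
          linarith only [this, hdm]
        · rw [hcast]
          have := mul_le_mul_of_nonneg_right hfl2.le hκpos.le
          linarith only [this, hdm]
  -- the bad event EUB
  have hbad : EUB a (fun n => P ((X n)⁻¹' Bδ'ᶜ
      ∩ (fun ω => X n ω + Y n ω)⁻¹' (Metric.ball z κ))) (-(J z + G)) := by
    refine (htail.add ha' (EUB.sum ha' hpiece)).mono_p ?_
    filter_upwards with n using hcover n
  -- final assembly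
  have hG4 : (0:ℝ) < G/4 := by linarith only [hG]
  have hG2 : (0:ℝ) < G/2 := by linarith only [hG]
  filter_upwards [hmain (G/4) hG4, hbad (G/2) hG2, hνbar (ε/4) (by linarith),
    count_le_exp ha' hG4 2] with n f1 f2 f3 f4
  have han := (ha n).le
  set b := EReal.exp ((a n * (-(J z + G) + G/2) : ℝ)) with hbs
  -- 2 * b ≤ exp (a n * (-(J z) - G/4))
  have hb2 : b + b ≤ EReal.exp ((a n * (-(J z) - G/4) : ℝ)) := by
    rw [show (a n * (-(J z) - G/4) : ℝ) = (a n * (G/4) : ℝ) + (a n * (-(J z + G) + G/2) : ℝ)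
      by ring, exp_coe_add, ← two_mul]
    refine mul_le_mul_left ?_ _
    rw [show ((2:ℝ≥0∞)) = ENNReal.ofReal 2 by norm_num]
    exact f4
  have hμν : b ≤ P.map (X n) Bδ' * P.map (Y n) (Metric.closedBall t (κ+δ')) := by
    have h1 : EReal.exp ((a n * (-(J z) - G/4) : ℝ))
        ≤ P.map (X n) Bδ' * P.map (Y n) (Metric.closedBall t (κ+δ')) + b := by
      refine le_trans ?_ ((hsplit n).trans (add_le_add_right f2 _))
      exact f1
    have h2 : b + b ≤ P.map (X n) Bδ' * P.map (Y n) (Metric.closedBall t (κ+δ')) + b :=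
      hb2.trans h1
    exact (ENNReal.add_le_add_iff_right (exp_coe_ne_top _)).mp h2
  -- cancel the Y factor
  have hμ : EReal.exp ((a n * (-(I x₀) - ε) : ℝ)) ≤ P.map (X n) Bδ' := by
    have h1 : b ≤ P.map (X n) Bδ' * EReal.exp ((a n * (-(K t - err) + ε/4) : ℝ)) :=
      hμν.trans (mul_le_mul_right f3 _)
    rw [hbs, show (a n * (-(J z + G) + G/2) : ℝ)
        = (a n * ((-(J z + G) + G/2) - (-(K t - err) + ε/4)) : ℝ)
          + (a n * (-(K t - err) + ε/4) : ℝ) by ring, exp_coe_add] at h1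
    have h2 : EReal.exp ((a n * ((-(J z + G) + G/2) - (-(K t - err) + ε/4)) : ℝ))
        ≤ P.map (X n) Bδ' :=
      (ENNReal.mul_le_mul_iff_left (exp_coe_ne_zero _) (exp_coe_ne_top _)).mp h1
    refine le_trans (exp_coe_mono ?_) h2
    apply mul_le_mul_of_nonneg_left ?_ han
    have hJz' : J z = I x₀ + K t := hJz
    linarith only [hGε, herr2, hJz', hG, hε]
  exact hμ.trans (measure_mono (Metric.ball_subset_ball hδ'δ))

lemma lower_open (P : Measure Ω) [IsProbabilityMeasure P]
    (X Y : ℕ → Ω → ℝ) (hX : ∀ n, Measurable (X n)) (hY : ∀ n, Measurable (Y n))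
    (hindep : ∀ n, IndepFun (X n) (Y n) P)
    (a : ℕ → ℝ) (ha : ∀ n, 0 < a n) (ha' : Tendsto a atTop atTop)
    (lam β : ℝ) (hlam : 0 < lam) (hlamβ : lam < β)
    (σ2 : ℝ) (hσ2 : σ2 = lam⁻¹ - β⁻¹)
    (I J K : ℝ → ℝ)
    (hI : I = fun x => x ^ 2 / (2 * σ2))
    (hJ : J = fun x => lam * x ^ 2 / 2)
    (hK : K = fun x => β * x ^ 2 / 2)
    (hXupper : ∀ C : Set ℝ, IsClosed C →
      limsup (fun n => (((a n)⁻¹ : ℝ) : EReal) * ENNReal.log (P.map (X n) C)) atTop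
        ≤ -(⨅ x ∈ C, (I x : EReal)))
    (hYupper : ∀ C : Set ℝ, IsClosed C →
      limsup (fun n => (((a n)⁻¹ : ℝ) : EReal) * ENNReal.log (P.map (Y n) C)) atTop
        ≤ -(⨅ x ∈ C, (K x : EReal)))
    (hXYlower : ∀ O : Set ℝ, IsOpen O →
      -(⨅ x ∈ O, (J x : EReal))
        ≤ liminf (fun n => (((a n)⁻¹ : ℝ) : EReal)
            * ENNReal.log (P.map (fun ω => X n ω + Y n ω) O)) atTop)
    (hYlower : ∀ O : Set ℝ, IsOpen O →
      -(⨅ x ∈ O, (K x : EReal))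
        ≤ liminf (fun n => (((a n)⁻¹ : ℝ) : EReal) * ENNReal.log (P.map (Y n) O)) atTop)
    (hXYupper : ∀ C : Set ℝ, IsClosed C →
      limsup (fun n => (((a n)⁻¹ : ℝ) : EReal)
          * ENNReal.log (P.map (fun ω => X n ω + Y n ω) C)) atTop
        ≤ -(⨅ x ∈ C, (J x : EReal))) :
    ∀ O : Set ℝ, IsOpen O →
      -(⨅ x ∈ O, (I x : EReal))
        ≤ liminf (fun n => (((a n)⁻¹ : ℝ) : EReal) * ENNReal.log (P.map (X n) O)) atTop := by
  intro O hO
  refine lower_of_elb ha ?_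
  intro x hx
  obtain ⟨δ, hδpos, hball⟩ := Metric.isOpen_iff.mp hO x hx
  have h1 : ELB a (fun n => P.map (X n) (Metric.ball x δ)) (-(I x)) :=
    elb_ball P X Y hX hY hindep a ha ha' lam β hlam hlamβ σ2 hσ2 I J K hI hJ hK
      hXupper hYupper hXYlower hYlower hXYupper x δ hδpos
  refine (le_liminf_of_elb ha h1).trans ?_
  refine liminf_le_liminf ?_
  filter_upwards with n
  refine mul_le_mul_of_nonneg_left ?_ ?_
  · exact ENNReal.log_monotone (measure_mono hball)
  · exact_mod_cast (inv_pos.mpr (ha n)).le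

end LDPAux

/-- Let `X_n, Y_n` be independent for each `n`, `a_n → ∞` positive,
`0 < λ < β`, `σ² = λ⁻¹ − β⁻¹`, `I x = x²/(2σ²)`, `J x = λx²/2`, `K x = βx²/2`. If the
laws of `Y_n` satisfy the LDP with speed `a_n` and rate `K`, and the laws of `X_n + Y_n`
satisfy the LDP with speed `a_n` and rate `J`, then the laws of `X_n` satisfy the LDP
with speed `a_n` and rate function `I`. -/
theorem stmt12 {Ω : Type*} [MeasurableSpace Ω] (P : Measure Ω) [IsProbabilityMeasure P]
    (X Y : ℕ → Ω → ℝ) (hX : ∀ n, Measurable (X n)) (hY : ∀ n, Measurable (Y n))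
    (hindep : ∀ n, IndepFun (X n) (Y n) P)
    (a : ℕ → ℝ) (ha : ∀ n, 0 < a n) (ha' : Tendsto a atTop atTop)
    (lam β : ℝ) (hlam : 0 < lam) (hlamβ : lam < β)
    (σ2 : ℝ) (hσ2 : σ2 = lam⁻¹ - β⁻¹)
    (I J K : ℝ → ℝ)
    (hI : I = fun x => x ^ 2 / (2 * σ2))
    (hJ : J = fun x => lam * x ^ 2 / 2)
    (hK : K = fun x => β * x ^ 2 / 2)
    (hLDPY : SatisfiesLDP (fun n => P.map (Y n)) a K)
    (hLDPXY : SatisfiesLDP (fun n => P.map (fun ω => X n ω + Y n ω)) a J) :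
    SatisfiesLDP (fun n => P.map (X n)) a I := by
  obtain ⟨hYu, hYl⟩ := hLDPY
  obtain ⟨hXYu, hXYl⟩ := hLDPXY
  have hXu := LDPAux.upper_closed P X Y hX hY hindep a ha ha' lam β hlam hlamβ σ2 hσ2
    I J K hI hJ hK hXYu hYl
  have hXl := LDPAux.lower_open P X Y hX hY hindep a ha ha' lam β hlam hlamβ σ2 hσ2
    I J K hI hJ hK hXu hYu hXYl hYl hXYu
  exact ⟨hXu, hXl⟩
end
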